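/- arXiv:0711.3785 — 2 statements merged into one kernel-verified Lean document; each statement's English description precedes it below -/
import Mathlib

section
/- Every nontrivial element of the positive 3-strand braid monoid B_3^+ is represented by exactly one ϕ-normal word on the alphabet {σ1, σ2}. -/
namespace Braid3

/-! ### The positive 3-strand braid monoid
presented by σ1, σ2 (letters `0`, `1` of `Fin 2`) with the relation σ1σ2σ1 = σ2σ1σ2. -/

def braidRel : FreeMonoid (Fin 2) → FreeMonoid (Fin 2) → Prop := fun u v =>
  u = FreeMonoid.of 0 * FreeMonoid.of 1 * FreeMonoid.of 0 ∧
  v = FreeMonoid.of 1 * FreeMonoid.of 0 * FreeMonoid.of 1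

def braidCon : Con (FreeMonoid (Fin 2)) := conGen braidRel

/-- The positive 3-strand braid monoid `B₃⁺`. -/
abbrev B3P := braidCon.Quotient

/-- The element of `B₃⁺` represented by a word on the alphabet {σ1, σ2}. -/
def mkw (w : List (Fin 2)) : B3P := braidCon.mk' (FreeMonoid.ofList w)

/-- σ1 as an element of B₃⁺. -/
def s1 : B3P := mkw [0]
/-- σ2 as an element of B₃⁺. -/
def s2 : B3P := mkw [1]
/-- Garside's fundamental braid Δ₃ = σ1σ2σ1. -/
def Δ : B3P := mkw [0, 1, 0]

/-! ### The 3-strand braid group B₃, with the same presentation. -/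

def grpRels : Set (FreeGroup (Fin 2)) :=
  { FreeGroup.of 0 * FreeGroup.of 1 * FreeGroup.of 0 *
    (FreeGroup.of 1 * FreeGroup.of 0 * FreeGroup.of 1)⁻¹ }

abbrev B3 := PresentedGroup grpRels

def g (i : Fin 2) : B3 := PresentedGroup.of i

theorem grp_braid_rel : g 0 * g 1 * g 0 = g 1 * g 0 * g 1 := by
  show (QuotientGroup.mk (FreeGroup.of 0 * FreeGroup.of 1 * FreeGroup.of 0) : B3)
      = QuotientGroup.mk (FreeGroup.of 1 * FreeGroup.of 0 * FreeGroup.of 1)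
  rw [QuotientGroup.eq]
  have h : (FreeGroup.of 0 * FreeGroup.of 1 * FreeGroup.of 0 *
      (FreeGroup.of 1 * FreeGroup.of 0 * FreeGroup.of 1)⁻¹ : FreeGroup (Fin 2)) ∈
      Subgroup.normalClosure grpRels :=
    Subgroup.subset_normalClosure rfl
  have h2 := (Subgroup.normalClosure_normal (s := grpRels)).conj_mem _ h
      (FreeGroup.of 0 * FreeGroup.of 1 * FreeGroup.of 0)⁻¹
  simp only [inv_inv] at h2
  have h3 : ((FreeGroup.of 0 * FreeGroup.of 1 * FreeGroup.of 0 : FreeGroup (Fin 2)))⁻¹ *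
      (FreeGroup.of 0 * FreeGroup.of 1 * FreeGroup.of 0 *
        (FreeGroup.of 1 * FreeGroup.of 0 * FreeGroup.of 1)⁻¹) *
      (FreeGroup.of 0 * FreeGroup.of 1 * FreeGroup.of 0) =
      ((FreeGroup.of 0 * FreeGroup.of 1 * FreeGroup.of 0 : FreeGroup (Fin 2))⁻¹ *
        (FreeGroup.of 1 * FreeGroup.of 0 * FreeGroup.of 1))⁻¹ := by
    group
  rw [h3] at h2
  exact (Subgroup.inv_mem_iff _).mp h2

/-- The canonical embedding of B₃⁺ into B₃. -/
def ι : B3P →* B3 :=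
  Con.lift _ (FreeMonoid.lift fun i => g i) (by
    apply Con.conGen_le.mpr
    rintro u v ⟨hu, hv⟩
    subst hu; subst hv
    rw [Con.ker_rel]
    simp only [map_mul, FreeMonoid.lift_eval_of]
    exact grp_braid_rel)

/-! ### The braid order -/

/-- Evaluation in B₃ of a word on the letters σ1^{±1}, σ2^{±1}
(a letter `(i, true)` is σ_{i+1}, a letter `(i, false)` is σ_{i+1}⁻¹). -/
def evalSW (w : List (Fin 2 × Bool)) : B3 :=
  (w.map fun l => if l.2 then g l.1 else (g l.1)⁻¹).prod

/-- A signed word is σ-positive if the generator of highest occurring index occurs,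
and occurs only positively. -/
def SigmaPos (w : List (Fin 2 × Bool)) : Prop :=
  ∃ i : Fin 2, (i, true) ∈ w ∧ (i, false) ∉ w ∧ ∀ l ∈ w, l.1 ≤ i

/-- The braid order on the group B₃. -/
def gLt (a b : B3) : Prop := ∃ w, SigmaPos w ∧ evalSW w = a⁻¹ * b

/-- The braid order on B₃⁺. -/
def blt (a b : B3P) : Prop := gLt (ι a) (ι b)

def ble (a b : B3P) : Prop := blt a b ∨ a = b

/-! ### ϕ-normal words and exponent sequences -/

/-- The minimal legal sizes e_k^min. -/
def emin : ℕ → ℕ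
  | 1 => 0
  | 2 => 1
  | _ => 2

/-- The letter of the k-th block (1-based, from the right): σ1 for odd k, σ2 for even k. -/
def letterOf (k : ℕ) : Fin 2 := if k % 2 = 1 then 0 else 1

/-- The word σ_{[p]}^{e_p} ⋯ σ2^{e_2} σ1^{e_1} associated with the exponent
sequence `E = [e_p, …, e_1]`. -/
def wordOfExpSeq : List ℕ → List (Fin 2)
  | [] => []
  | e :: rest => List.replicate e (letterOf (rest.length + 1)) ++ wordOfExpSeq rest

/-- `expAt E k` is e_k, the k-th entry of the exponent sequence counted from the right,
1-based. -/
def expAt (E : List ℕ) (k : ℕ) : ℕ := E.getD (E.length - k) 0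

/-- `E = [e_p, …, e_1]` is the exponent sequence of a ϕ-normal word: the final block
decomposition is minimal (leading exponent nonzero) and e_k ≥ e_k^min for k < p. -/
def IsNormalSeq (E : List ℕ) : Prop :=
  E ≠ [] ∧ 1 ≤ expAt E E.length ∧ ∀ k, 1 ≤ k → k < E.length → emin k ≤ expAt E k

/-- A word on {σ1, σ2} is ϕ-normal if its (minimal) block decomposition
σ_{[p]}^{e_p} ⋯ σ2^{e_2} σ1^{e_1} satisfies e_k ≥ e_k^min for k < p. -/
def IsPhiNormalWord (w : List (Fin 2)) : Prop :=
  ∃ E, IsNormalSeq E ∧ w = wordOfExpSeq E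

/-- `E` is the exponent sequence of the braid `b`. -/
def HasExpSeq (b : B3P) (E : List ℕ) : Prop :=
  IsNormalSeq E ∧ mkw (wordOfExpSeq E) = b

/-- The exponent sequence of a (nontrivial) braid of B₃⁺. -/
noncomputable def expSeqOf (b : B3P) : List ℕ := by
  classical exact if h : ∃ E, HasExpSeq b E then h.choose else []

/-- The critical position of an exponent sequence: the least r < p with e_r > e_r^min
if it exists, and p otherwise. -/
noncomputable def critPos (E : List ℕ) : ℕ := by
  classical exact
    if h : ∃ r, 1 ≤ r ∧ r < E.length ∧ emin r < expAt E r then Nat.find h else E.length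

/-- The effect of the operation b ↦ b{t} on exponent sequences: remove one letter from
the critical block, and add t letters to the next block if the latter exists. -/
noncomputable def stepSeq (E : List ℕ) (t : ℕ) : List ℕ :=
  let p := E.length
  let r := critPos E
  let E1 := E.set (p - r) (expAt E r - 1)
  if 2 ≤ r then E1.set (p - (r - 1)) (expAt E (r - 1) + t) else E1

/-- The operation b ↦ b{t} of Definition 2.2 (with 1{t} = 1). -/
noncomputable def step (b : B3P) (t : ℕ) : B3P := by
  classical exact if b = 1 then 1 else mkw (wordOfExpSeq (stepSeq (expSeqOf b) t))

/-- The G₃-sequence from b: `gseq b 0 = b`, `gseq b t = (gseq b (t-1)){t}`. -/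
noncomputable def gseq (b : B3P) : ℕ → B3P
  | 0 => b
  | t + 1 => step (gseq b t) (t + 1)

/-- T(b): the length of the G₃-sequence from b, i.e. the least t with b{1}{2}⋯{t} = 1. -/
noncomputable def T (b : B3P) : ℕ := sInf {t | gseq b t = 1}

/-! ### The ordinal of a 3-braid, fundamental sequences, the Hardy hierarchy -/

open Ordinal in
/-- Sum Σ ω^{k-1}·(e_k − e_k^min) over the tail of an exponent sequence. -/
noncomputable def ordSeqAux : List ℕ → Ordinal
  | [] => 0
  | e :: rest =>
    omega0 ^ (rest.length : Ordinal) * ((e - emin (rest.length + 1) : ℕ) : Ordinal)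
      + ordSeqAux rest

open Ordinal in
/-- ord of an exponent sequence (e_p, …, e_1):
ω^{p−1}·e_p + Σ_{p>k≥1} ω^{k−1}·(e_k − e_k^min). -/
noncomputable def ordSeq : List ℕ → Ordinal
  | [] => 0
  | e :: rest => omega0 ^ (rest.length : Ordinal) * (e : Ordinal) + ordSeqAux rest

/-- The ordinal ord(b) < ω^ω attached to a braid of B₃⁺ (with ord(1) = 0). -/
noncomputable def ordOf (b : B3P) : Ordinal := ordSeq (expSeqOf b)

open Ordinal in
/-- Fundamental sequences: 0[x] = 0, (α+1)[x] = α, (γ + ω^{r+1})[x] = γ + ω^r·x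
(CNF decomposition), and (ω^ω)[x] = ω^x. -/
noncomputable def fundSeq (α : Ordinal) (x : ℕ) : Ordinal :=
  open scoped Classical in
  if α = 0 then 0
  else if h : ∃ β, α = β + 1 then h.choose
  else if α = omega0 ^ omega0 then omega0 ^ (x : Ordinal)
  else if h : ∃ p : Ordinal × ℕ, α = p.1 + omega0 ^ ((p.2 : Ordinal) + 1) ∧
      omega0 ^ ((p.2 : Ordinal) + 1) ∣ p.1
    then h.choose.1 + omega0 ^ (h.choose.2 : Ordinal) * (x : Ordinal)
  else 0

open Ordinal in
theorem fundSeq_lt (α : Ordinal) (x : ℕ) (h0 : ¬α = 0) (hs : ¬∃ β, α = β + 1) :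
    fundSeq α x < α := by
  classical
  rw [fundSeq]
  rw [if_neg h0, dif_neg hs]
  by_cases hw : α = omega0 ^ omega0
  · rw [if_pos hw, hw]
    exact (Ordinal.opow_lt_opow_iff_right Ordinal.one_lt_omega0).mpr (Ordinal.nat_lt_omega0 x)
  · rw [if_neg hw]
    by_cases hd : ∃ p : Ordinal × ℕ, α = p.1 + omega0 ^ ((p.2 : Ordinal) + 1) ∧
        omega0 ^ ((p.2 : Ordinal) + 1) ∣ p.1
    · rw [dif_pos hd]
      obtain ⟨hα, -⟩ := hd.choose_spec
      have hlt : omega0 ^ ((hd.choose.2 : Ordinal)) * (x : Ordinal)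
          < omega0 ^ ((hd.choose.2 : Ordinal) + 1) := by
        rw [Ordinal.add_one_eq_succ, Ordinal.opow_succ]
        exact mul_lt_mul_of_pos_left (Ordinal.natCast_lt_omega0 x)
          (Ordinal.opow_pos _ Ordinal.omega0_pos)
      calc hd.choose.1 + omega0 ^ (hd.choose.2 : Ordinal) * (x : Ordinal)
          < hd.choose.1 + omega0 ^ ((hd.choose.2 : Ordinal) + 1) :=
            (add_lt_add_iff_left _).mpr hlt
        _ = α := hα.symm
    · rw [dif_neg hd]
      exact pos_iff_ne_zero.mpr h0

open Ordinal in
open scoped Classical in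
/-- The Hardy hierarchy: H_0(x) = x, H_{α+1}(x) = H_α(x+1), H_λ(x) = H_{λ[x]}(x+1). -/
noncomputable def hardy (α : Ordinal) (x : ℕ) : ℕ :=
  if α = 0 then x
  else if h : ∃ β, α = β + 1 then hardy h.choose (x + 1)
  else hardy (fundSeq α x) (x + 1)
termination_by α
decreasing_by
  · have hs := h.choose_spec
    have h2 : h.choose < h.choose + 1 := by
      rw [Ordinal.add_one_eq_succ]; exact Order.lt_succ _
    exact lt_of_lt_of_eq h2 hs.symm
  · exact fundSeq_lt _ _ (by assumption) (by assumption)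

/-! ### Garside complexity -/

/-- The Garside complexity ‖b‖: the least ℓ such that b left-divides Δ₃^ℓ. -/
noncomputable def compl (b : B3P) : ℕ := sInf {ℓ | ∃ c, b * c = Δ ^ ℓ}


/-! ### Auxiliary development for the normal form -/

lemma emin_eq (k : ℕ) : emin k = if k = 1 then 0 else if k = 2 then 1 else 2 := by
  match k with
  | 0 => rfl
  | 1 => rfl
  | 2 => rfl
  | (n+3) => rfl

lemma emin_one : emin 1 = 0 := rfl
lemma emin_two : emin 2 = 1 := rfl
lemma emin_of_three_le {k : ℕ} (h : 3 ≤ k) : emin k = 2 := by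
  rw [emin_eq, if_neg (by omega), if_neg (by omega)]

lemma emin_le_two (k : ℕ) : emin k ≤ 2 := by
  rw [emin_eq]; split
  · omega
  · split <;> omega

lemma one_le_emin {k : ℕ} (h : 2 ≤ k) : 1 ≤ emin k := by
  rw [emin_eq, if_neg (by omega)]; split <;> omega

lemma letterOf_odd {k : ℕ} (h : k % 2 = 1) : letterOf k = 0 := by
  simp [letterOf, h]
lemma letterOf_even {k : ℕ} (h : k % 2 = 0) : letterOf k = 1 := by
  simp [letterOf, h]

lemma letterOf_add_two (k : ℕ) : letterOf (k + 2) = letterOf k := by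
  unfold letterOf
  have h : (k + 2) % 2 = k % 2 := by omega
  rw [h]

lemma letterOf_succ_ne (k : ℕ) : letterOf (k + 1) ≠ letterOf k := by
  rcases Nat.mod_two_eq_zero_or_one k with h | h
  · rw [letterOf_even h, letterOf_odd (by omega)]; decide
  · rw [letterOf_odd h, letterOf_even (by omega)]; decide

lemma fin2_resolve {i j : Fin 2} (h : i ≠ j) : ∀ x : Fin 2, x = i ∨ x = j := by
  revert h; fin_cases i <;> fin_cases j <;> decide

lemma eq_letterOf_succ {i : Fin 2} {k : ℕ} (h : i ≠ letterOf k) : i = letterOf (k + 1) := by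
  rcases fin2_resolve (letterOf_succ_ne k) i with h1 | h1
  · exact h1
  · exact absurd h1 h

/-- The tail of a normal exponent sequence: each entry `e_k` (position `k` counted
1-based from the right) satisfies `emin k ≤ e_k`. -/
def tailOK : List ℕ → Prop
  | [] => True
  | e :: l => emin (l.length + 1) ≤ e ∧ tailOK l

/-- Recursive form of normality of an exponent sequence. -/
def NormSeq : List ℕ → Prop
  | [] => False
  | e :: rest => 1 ≤ e ∧ tailOK rest

lemma tailOK_nil : tailOK [] := trivial
lemma tailOK_cons {e : ℕ} {l : List ℕ} :
    tailOK (e :: l) ↔ emin (l.length + 1) ≤ e ∧ tailOK l := Iff.rfl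
lemma normSeq_cons {e : ℕ} {rest : List ℕ} :
    NormSeq (e :: rest) ↔ 1 ≤ e ∧ tailOK rest := Iff.rfl

/-- `consP a l` is `a :: l` if `a > 0`, else `l`. -/
def consP (a : ℕ) (l : List ℕ) : List ℕ := if a = 0 then l else a :: l

lemma consP_zero (l : List ℕ) : consP 0 l = l := rfl
lemma consP_pos {a : ℕ} (h : a ≠ 0) (l : List ℕ) : consP a l = a :: l := if_neg h

/-- The cascading rewriting used to renormalize after prepending a letter. -/
def fixSeq : ℕ → ℕ → List ℕ → List ℕ
  | a, b, [] => [a, 1, b]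
  | a, b, c :: l => consP (a - 1) (fixSeq b (c + 1) l)

lemma fixSeq_nil (a b : ℕ) : fixSeq a b [] = [a, 1, b] := rfl
lemma fixSeq_cons (a b c : ℕ) (l : List ℕ) :
    fixSeq a b (c :: l) = consP (a - 1) (fixSeq b (c + 1) l) := rfl

lemma fixSeq_length : ∀ (l : List ℕ) (a c : ℕ), tailOK (c :: l) → (l ≠ [] → 2 ≤ a) →
    (fixSeq a (c + 1) l).length = l.length + 3 := by
  intro l
  induction l with
  | nil => intro a c _ _; rfl
  | cons d l' ih =>
    intro a c hc ha
    have ha2 : 2 ≤ a := ha (by simp)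
    obtain ⟨hc1, hd⟩ := hc
    have hc1' : emin (l'.length + 2) ≤ c := by simpa using hc1
    have hc2 : 1 ≤ c := le_trans (one_le_emin (by omega)) hc1'
    have hinner := ih (c + 1) d hd (fun _ => by omega)
    rw [fixSeq_cons, consP_pos (by omega), List.length_cons, hinner]
    simp

lemma fixSeq_norm : ∀ (l : List ℕ) (a c : ℕ), 1 ≤ a → tailOK (c :: l) →
    NormSeq (fixSeq a (c + 1) l) ∧
      ((2 ≤ a ∧ (l ≠ [] → 3 ≤ a)) → tailOK (fixSeq a (c + 1) l)) := by
  intro l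
  induction l with
  | nil =>
    intro a c ha _
    rw [fixSeq_nil]
    constructor
    · exact ⟨ha, by simp [tailOK, emin_eq]⟩
    · rintro ⟨h2, -⟩
      simp [tailOK, emin_eq]
      omega
  | cons d l' ih =>
    intro a c ha hc
    obtain ⟨hc1, hd⟩ := hc
    have hc1' : emin (l'.length + 2) ≤ c := by simpa using hc1
    have hc2 : 1 ≤ c := le_trans (one_le_emin (by omega)) hc1'
    have hc3 : l' ≠ [] → 2 ≤ c := by
      intro hne
      have h3 : 3 ≤ l'.length + 2 := by
        cases l' with
        | nil => simp at hne
        | cons _ _ => simp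
      calc 2 = emin (l'.length + 2) := (emin_of_three_le h3).symm
        _ ≤ c := hc1'
    have hinner := ih (c + 1) d (by omega) hd
    have hinnerTail : tailOK (fixSeq (c + 1) (d + 1) l') :=
      hinner.2 ⟨by omega, fun h => by have := hc3 h; omega⟩
    rw [fixSeq_cons]
    rcases Nat.eq_zero_or_pos (a - 1) with h0 | hpos
    · rw [h0, consP_zero]
      refine ⟨hinner.1, ?_⟩
      rintro ⟨h2, h3⟩
      exact absurd (h3 (by simp)) (by omega)
    · rw [consP_pos (by omega)]
      constructor
      · exact ⟨hpos, hinnerTail⟩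
      · rintro ⟨-, h3⟩
        have h3' : 3 ≤ a := h3 (by simp)
        exact ⟨le_trans (emin_le_two _) (by omega), hinnerTail⟩

/-! ### mkw lemmas -/

lemma mkw_append (u v : List (Fin 2)) : mkw (u ++ v) = mkw u * mkw v := by
  unfold mkw
  rw [FreeMonoid.ofList_append, map_mul]

lemma mkw_cons (i : Fin 2) (w : List (Fin 2)) : mkw (i :: w) = mkw [i] * mkw w := by
  have h : (i :: w) = [i] ++ w := rfl
  rw [h, mkw_append]

lemma mkw_nil : mkw [] = 1 := rfl

lemma mkw_braid_base : mkw [0, 1, 0] = mkw [1, 0, 1] := by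
  have h : braidCon (FreeMonoid.ofList [0, 1, 0]) (FreeMonoid.ofList [1, 0, 1]) :=
    ConGen.Rel.of _ _ ⟨rfl, rfl⟩
  exact (Con.eq _).mpr h

lemma mkw_braid3 {x y : Fin 2} (h : x ≠ y) (w : List (Fin 2)) :
    mkw (x :: y :: x :: w) = mkw (y :: x :: y :: w) := by
  have hx : mkw [x, y, x] = mkw [y, x, y] := by
    fin_cases x <;> fin_cases y <;>
      first
        | exact absurd rfl h
        | exact mkw_braid_base
        | exact mkw_braid_base.symm
  have e1 : (x :: y :: x :: w) = [x, y, x] ++ w := rfl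
  have e2 : (y :: x :: y :: w) = [y, x, y] ++ w := rfl
  rw [e1, e2, mkw_append, mkw_append, hx]

lemma mkw_braid_pow {x y : Fin 2} (h : x ≠ y) :
    ∀ (k : ℕ) (w : List (Fin 2)),
      mkw (x :: y :: (List.replicate k x ++ w)) = mkw (List.replicate k y ++ x :: y :: w) := by
  intro k
  induction k with
  | zero => intro w; simp
  | succ k ih =>
    intro w
    have e1 : x :: y :: (List.replicate (k+1) x ++ w) =
        x :: y :: x :: (List.replicate k x ++ w) := by
      simp [List.replicate_succ]
    rw [e1, mkw_braid3 h, mkw_cons, ih w, ← mkw_cons]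
    simp [List.replicate_succ]

lemma mkw_congr_left (u : List (Fin 2)) {v1 v2 : List (Fin 2)} (h : mkw v1 = mkw v2) :
    mkw (u ++ v1) = mkw (u ++ v2) := by
  rw [mkw_append, mkw_append, h]

lemma mkw_list_congr {l1 l2 : List (Fin 2)} (h : l1 = l2) : mkw l1 = mkw l2 := by rw [h]

lemma word_cons (e : ℕ) (rest : List ℕ) :
    wordOfExpSeq (e :: rest) =
      List.replicate e (letterOf (rest.length + 1)) ++ wordOfExpSeq rest := rfl

lemma fixSeq_mkw : ∀ (l : List ℕ) (a c : ℕ), 1 ≤ a → tailOK (c :: l) →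
    mkw (wordOfExpSeq (fixSeq a (c + 1) l)) =
      mkw (List.replicate a (letterOf (l.length + 3)) ++
        letterOf (l.length + 2) :: wordOfExpSeq ((c + 1) :: l)) := by
  intro l
  induction l with
  | nil =>
    intro a c _ _
    rw [fixSeq_nil]
    refine mkw_list_congr ?_
    rw [word_cons, word_cons, word_cons]
    simp [wordOfExpSeq, List.replicate_succ]
  | cons d l' ih =>
    intro a c ha hc
    obtain ⟨hc1, hd⟩ := hc
    have hc1' : emin (l'.length + 2) ≤ c := by simpa using hc1
    have hc2 : 1 ≤ c := le_trans (one_le_emin (by omega)) hc1'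
    have hxy : letterOf (l'.length + 2) ≠ letterOf (l'.length + 1) :=
      letterOf_succ_ne (l'.length + 1)
    have hWlen : (fixSeq (c + 1) (d + 1) l').length = l'.length + 3 :=
      fixSeq_length l' (c + 1) d hd (fun _ => by omega)
    have hIH : mkw (wordOfExpSeq (fixSeq (c + 1) (d + 1) l')) =
        mkw (List.replicate (c + 1) (letterOf (l'.length + 1)) ++
          (letterOf (l'.length + 2) ::
            (List.replicate (d + 1) (letterOf (l'.length + 1)) ++ wordOfExpSeq l'))) := by
      have h := ih (c + 1) d (by omega) hd
      rw [word_cons] at h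
      rw [show letterOf (l'.length + 3) = letterOf (l'.length + 1) from letterOf_add_two _]
        at h
      exact h
    have step1 : mkw (wordOfExpSeq (fixSeq a (c + 1) (d :: l'))) =
        mkw (List.replicate (a - 1) (letterOf (l'.length + 2)) ++
          wordOfExpSeq (fixSeq (c + 1) (d + 1) l')) := by
      rw [fixSeq_cons]
      rcases Nat.eq_zero_or_pos (a - 1) with h0 | hpos
      · rw [h0, consP_zero]
        simp
      · rw [consP_pos (by omega)]
        refine mkw_list_congr ?_
        rw [word_cons, hWlen]
        rw [show letterOf (l'.length + 3 + 1) = letterOf (l'.length + 2) from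
          letterOf_add_two (l'.length + 2)]
    have step2 : mkw (List.replicate (a - 1) (letterOf (l'.length + 2)) ++
          (letterOf (l'.length + 2) :: letterOf (l'.length + 1) ::
            (List.replicate (c + 1) (letterOf (l'.length + 2)) ++
              (List.replicate d (letterOf (l'.length + 1)) ++ wordOfExpSeq l')))) =
        mkw (List.replicate (a - 1) (letterOf (l'.length + 2)) ++
          (List.replicate (c + 1) (letterOf (l'.length + 1)) ++
            (letterOf (l'.length + 2) ::
              (List.replicate (d + 1) (letterOf (l'.length + 1)) ++ wordOfExpSeq l')))) := by
      refine mkw_congr_left _ ?_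
      rw [mkw_braid_pow hxy (c + 1) _]
      refine mkw_list_congr ?_
      simp [List.replicate_succ]
    have final : List.replicate a (letterOf ((d :: l').length + 3)) ++
        letterOf ((d :: l').length + 2) :: wordOfExpSeq ((c + 1) :: d :: l') =
        List.replicate (a - 1) (letterOf (l'.length + 2)) ++
          (letterOf (l'.length + 2) :: letterOf (l'.length + 1) ::
            (List.replicate (c + 1) (letterOf (l'.length + 2)) ++
              (List.replicate d (letterOf (l'.length + 1)) ++ wordOfExpSeq l'))) := by
      rw [word_cons, word_cons]
      rw [show letterOf ((d :: l').length + 3) = letterOf (l'.length + 2) from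
        letterOf_add_two (l'.length + 2)]
      rw [show letterOf ((d :: l').length + 2) = letterOf (l'.length + 1) from
        letterOf_add_two (l'.length + 1)]
      rw [show letterOf ((d :: l').length + 1) = letterOf (l'.length + 2) from rfl]
      rw [show List.replicate a (letterOf (l'.length + 2)) =
            List.replicate (a - 1) (letterOf (l'.length + 2)) ++ [letterOf (l'.length + 2)] by
        rw [← List.replicate_succ']; congr 1; omega]
      simp [List.append_assoc]
    rw [step1, mkw_congr_left (List.replicate (a - 1) (letterOf (l'.length + 2))) hIH]
    rw [final]
    exact step2.symm


/-! ### Prepending a letter to a normal sequence -/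

/-- The cascade entry: `casc (a :: c :: l)` renormalizes `x¹ y^a x^c ⋯`. -/
def casc : List ℕ → List ℕ
  | a :: c :: l => fixSeq a (c + 1) l
  | rest => 1 :: 1 :: rest

lemma casc_cons (a c : ℕ) (l : List ℕ) : casc (a :: c :: l) = fixSeq a (c + 1) l := rfl

/-- Prepend the letter `i` to the normal sequence `E`, renormalizing. -/
def prep (i : Fin 2) (E : List ℕ) : List ℕ :=
  match E with
  | [] => if i = 0 then [1] else [1, 0]
  | e :: rest =>
    if i = letterOf (rest.length + 1) then (e + 1) :: rest
    else if emin (rest.length + 1) ≤ e then 1 :: e :: rest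
    else casc rest

lemma prep_cons (i : Fin 2) (e : ℕ) (rest : List ℕ) :
    prep i (e :: rest) =
      if i = letterOf (rest.length + 1) then (e + 1) :: rest
      else if emin (rest.length + 1) ≤ e then 1 :: e :: rest
      else casc rest := rfl

lemma prep_inc {i : Fin 2} {e : ℕ} {rest : List ℕ} (h : i = letterOf (rest.length + 1)) :
    prep i (e :: rest) = (e + 1) :: rest := by
  rw [prep_cons, if_pos h]

lemma prep_push {i : Fin 2} {e : ℕ} {rest : List ℕ} (h1 : ¬i = letterOf (rest.length + 1))
    (h2 : emin (rest.length + 1) ≤ e) :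
    prep i (e :: rest) = 1 :: e :: rest := by
  rw [prep_cons, if_neg h1, if_pos h2]

lemma prep_casc {i : Fin 2} {e a c : ℕ} {l : List ℕ}
    (h1 : ¬i = letterOf (l.length + 3)) (h2 : ¬emin (l.length + 3) ≤ e) :
    prep i (e :: a :: c :: l) = fixSeq a (c + 1) l := by
  have hlen : (a :: c :: l).length + 1 = l.length + 3 := by simp
  rw [prep_cons, hlen, if_neg h1, if_neg h2, casc_cons]

lemma prep_norm (i : Fin 2) (E : List ℕ) (h : E = [] ∨ NormSeq E) : NormSeq (prep i E) := by
  rcases h with h | h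
  · subst h
    by_cases hi : i = 0
    · rw [show prep i [] = [1] by rw [hi]; rfl]
      exact ⟨le_refl 1, trivial⟩
    · rw [show prep i [] = [1, 0] by simp [prep, hi]]
      exact ⟨le_refl 1, by simp [tailOK, emin_one]⟩
  · rcases E with _ | ⟨e, rest⟩
    · exact absurd h (by simp [NormSeq])
    · obtain ⟨he, ht⟩ := h
      rw [prep_cons]
      split_ifs with h1 h2
      · exact ⟨by omega, ht⟩
      · exact ⟨le_refl 1, h2, ht⟩
      · rcases rest with _ | ⟨a, rest1⟩
        · exact absurd (by rw [show (([] : List ℕ)).length + 1 = 1 from rfl, emin_one]; omega) h2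
        · rcases rest1 with _ | ⟨c, l⟩
          · exact absurd (by rw [show ([a] : List ℕ).length + 1 = 2 from rfl, emin_two]; omega) h2
          · rw [casc_cons]
            obtain ⟨ha1, htc⟩ := ht
            have ha : 1 ≤ a := le_trans (one_le_emin (by simp)) ha1
            exact (fixSeq_norm l a c ha htc).1

lemma prep_mkw (i : Fin 2) (E : List ℕ) (h : E = [] ∨ NormSeq E) :
    mkw (wordOfExpSeq (prep i E)) = mkw (i :: wordOfExpSeq E) := by
  rcases h with h | h
  · subst h
    by_cases hi : i = 0
    · subst hi; rfl
    · have hi1 : i = 1 := by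
        rcases fin2_resolve (show (0 : Fin 2) ≠ 1 by decide) i with h1 | h1
        · exact absurd h1 hi
        · exact h1
      subst hi1; rfl
  · rcases E with _ | ⟨e, rest⟩
    · exact absurd h (by simp [NormSeq])
    · obtain ⟨he, ht⟩ := h
      rw [prep_cons]
      split_ifs with h1 h2
      · refine mkw_list_congr ?_
        rw [word_cons, word_cons, h1, List.replicate_succ]
        simp
      · refine mkw_list_congr ?_
        rw [word_cons (e := 1), word_cons]
        rw [show List.replicate 1 (letterOf ((e :: rest).length + 1)) =
            [letterOf (rest.length + 1 + 1)] by simp]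
        rw [← eq_letterOf_succ h1]
        simp
      · rcases rest with _ | ⟨a, rest1⟩
        · exact absurd (by rw [show (([] : List ℕ)).length + 1 = 1 from rfl, emin_one]; omega) h2
        · rcases rest1 with _ | ⟨c, l⟩
          · exact absurd (by rw [show ([a] : List ℕ).length + 1 = 2 from rfl, emin_two]; omega) h2
          · rw [casc_cons]
            obtain ⟨ha1, htc⟩ := ht
            have ha : 1 ≤ a := le_trans (one_le_emin (by simp)) ha1
            have he1 : e = 1 := by
              have h3 : emin ((a :: c :: l).length + 1) = 2 := emin_of_three_le (by simp)
              rw [h3] at h2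
              omega
            subst he1
            -- letters
            have hiY : i = letterOf (l.length + 2) := by
              have h4 := eq_letterOf_succ h1
              rw [show (a :: c :: l).length + 1 + 1 = l.length + 2 + 2 from rfl,
                letterOf_add_two] at h4
              exact h4
            have hZ : letterOf (l.length + 3) = letterOf (l.length + 1) := letterOf_add_two _
            have hYZ : letterOf (l.length + 2) ≠ letterOf (l.length + 1) :=
              letterOf_succ_ne (l.length + 1)
            rw [fixSeq_mkw l a c ha htc]
            -- RHS : i :: word (1 :: a :: c :: l)
            have rhs : (i :: wordOfExpSeq (1 :: a :: c :: l)) =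
                letterOf (l.length + 2) :: letterOf (l.length + 1) ::
                  (List.replicate a (letterOf (l.length + 2)) ++
                    (List.replicate c (letterOf (l.length + 1)) ++ wordOfExpSeq l)) := by
              rw [hiY, word_cons, word_cons, word_cons]
              rw [show letterOf ((a :: c :: l).length + 1) = letterOf (l.length + 1) by
                rw [show (a :: c :: l).length + 1 = l.length + 1 + 2 from rfl, letterOf_add_two]]
              rw [show letterOf ((c :: l).length + 1) = letterOf (l.length + 2) from rfl]
              simp [List.replicate_succ]
            rw [rhs, mkw_braid_pow hYZ a _]
            refine mkw_list_congr ?_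
            rw [hZ, word_cons]
            rw [show letterOf (l.length + 1) :: (List.replicate c (letterOf (l.length + 1)) ++
                  wordOfExpSeq l) =
                List.replicate (c + 1) (letterOf (l.length + 1)) ++ wordOfExpSeq l by
              simp [List.replicate_succ]]

/-! ### The normal form function -/

/-- The normal form (exponent sequence) of a word, computed right-to-left. -/
def nfList (w : List (Fin 2)) : List ℕ := w.foldr prep []

lemma foldr_normOrNil : ∀ (w : List (Fin 2)) (X : List ℕ), (X = [] ∨ NormSeq X) →
    (List.foldr prep X w = [] ∨ NormSeq (List.foldr prep X w)) := by
  intro w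
  induction w with
  | nil => intro X h; exact h
  | cons i w ih =>
    intro X h
    exact Or.inr (prep_norm i _ (ih X h))

lemma foldr_mkw : ∀ (w : List (Fin 2)) (X : List ℕ), (X = [] ∨ NormSeq X) →
    mkw (wordOfExpSeq (List.foldr prep X w)) = mkw (w ++ wordOfExpSeq X) := by
  intro w
  induction w with
  | nil => intro X _; rfl
  | cons i w ih =>
    intro X h
    rw [List.foldr_cons, prep_mkw i _ (foldr_normOrNil w X h), List.cons_append,
      mkw_cons i (wordOfExpSeq (List.foldr prep X w)), mkw_cons i (w ++ wordOfExpSeq X),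
      ih X h]

lemma nfList_mkw (w : List (Fin 2)) : mkw (wordOfExpSeq (nfList w)) = mkw w := by
  have h := foldr_mkw w [] (Or.inl rfl)
  simpa [nfList, wordOfExpSeq] using h

lemma nfList_norm {w : List (Fin 2)} (h : w ≠ []) : NormSeq (nfList w) := by
  rcases w with _ | ⟨i, w⟩
  · exact absurd rfl h
  · exact prep_norm i _ (foldr_normOrNil w [] (Or.inl rfl))

/-! ### nf is the identity on normal words -/

lemma foldr_replicate : ∀ (k : ℕ) (x : Fin 2) (u : List (Fin 2)) (X : List ℕ),
    List.foldr prep X (List.replicate k x ++ u) = (prep x)^[k] (List.foldr prep X u) := by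
  intro k
  induction k with
  | zero => intro x u X; simp
  | succ k ih =>
    intro x u X
    rw [List.replicate_succ, List.cons_append, List.foldr_cons, ih,
      Function.iterate_succ_apply']

lemma iter_prep_top : ∀ (k : ℕ) (rest : List ℕ), 1 ≤ k → tailOK rest →
    (prep (letterOf (rest.length + 1)))^[k] rest = k :: rest := by
  intro k
  induction k with
  | zero => intro rest h _; omega
  | succ k ih =>
    intro rest _ ht
    rcases Nat.eq_zero_or_pos k with h0 | hk
    · subst h0
      rw [Function.iterate_one]
      rcases rest with _ | ⟨r, rest'⟩
      · rfl
      · exact prep_push (by exact letterOf_succ_ne (rest'.length + 1)) ht.1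
    · rw [Function.iterate_succ_apply', ih rest hk ht]
      exact prep_inc rfl

lemma iter_prep_one : ∀ (k : ℕ), 1 ≤ k → (prep 1)^[k] ([] : List ℕ) = [k, 0] := by
  intro k
  induction k with
  | zero => intro h; omega
  | succ k ih =>
    intro _
    rcases Nat.eq_zero_or_pos k with h0 | hk
    · subst h0; rfl
    · rw [Function.iterate_succ_apply', ih hk]
      exact prep_inc (by rfl)

lemma nf_word : ∀ (E : List ℕ), NormSeq E → List.foldr prep [] (wordOfExpSeq E) = E := by
  intro E
  induction E with
  | nil => intro h; exact absurd h (by simp [NormSeq])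
  | cons e rest ih =>
    rintro ⟨he, ht⟩
    rw [word_cons, foldr_replicate]
    rcases rest with _ | ⟨r, rest'⟩
    · exact iter_prep_top e [] he tailOK_nil
    · rcases Nat.eq_zero_or_pos r with h0 | hr
      · subst h0
        have hre : rest' = [] := by
          obtain ⟨h1, -⟩ := ht
          cases rest' with
          | nil => rfl
          | cons x t =>
            exfalso
            have h2 : 1 ≤ emin ((x :: t).length + 1) := one_le_emin (by simp)
            omega
        subst hre
        rw [show wordOfExpSeq [0] = [] from rfl]
        rw [show letterOf (([0] : List ℕ).length + 1) = 1 from rfl]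
        exact iter_prep_one e he
      · have hns : NormSeq (r :: rest') := ⟨hr, ht.2⟩
        rw [ih hns]
        exact iter_prep_top e (r :: rest') he ht


/-! ### The hexagon: compatibility of `prep` with the braid relation -/

lemma not_eq_letterOf_zero {k : ℕ} (h : letterOf k = 0) : ¬(1 : Fin 2) = letterOf k := by
  rw [h]; decide
lemma not_eq_letterOf_one {k : ℕ} (h : letterOf k = 1) : ¬(0 : Fin 2) = letterOf k := by
  rw [h]; decide

lemma hexagon : ∀ (X : List ℕ), (X = [] ∨ NormSeq X) →
    prep 0 (prep 1 (prep 0 X)) = prep 1 (prep 0 (prep 1 X)) := by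
  intro X h
  rcases h with h | h
  · subst h; rfl
  rcases X with _ | ⟨e, rest⟩
  · exact absurd h (by simp [NormSeq])
  obtain ⟨he, ht⟩ := h
  rcases rest with _ | ⟨c, rest1⟩
  · -- Case X = [e]
    rw [prep_inc (show (0 : Fin 2) = letterOf (([] : List ℕ).length + 1) by decide)]
    rw [prep_push (show ¬(1 : Fin 2) = letterOf (([] : List ℕ).length + 1) by decide)
      (show emin (([] : List ℕ).length + 1) ≤ e + 1 by simp [emin_eq] <;> omega)]
    rw [prep_push (not_eq_letterOf_one (k := ([e + 1] : List ℕ).length + 1) (by simp [letterOf]))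
      (show emin (([e + 1] : List ℕ).length + 1) ≤ 1 by simp [emin_eq] <;> omega)]
    rw [prep_push (show ¬(1 : Fin 2) = letterOf (([] : List ℕ).length + 1) by decide)
      (show emin (([] : List ℕ).length + 1) ≤ e by simp [emin_eq] <;> omega)]
    rw [prep_push (not_eq_letterOf_one (k := ([e] : List ℕ).length + 1) (by simp [letterOf]))
      (show emin (([e] : List ℕ).length + 1) ≤ 1 by simp [emin_eq] <;> omega)]
    rw [prep_casc (l := ([] : List ℕ))
      (show ¬(1 : Fin 2) = letterOf (([] : List ℕ).length + 3) by decide)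
      (show ¬emin (([] : List ℕ).length + 3) ≤ 1 by decide)]
    rfl
  rcases rest1 with _ | ⟨d, l₂⟩
  · -- Case X = [e, c]
    rw [prep_push (not_eq_letterOf_one (k := ([c] : List ℕ).length + 1) (by simp [letterOf]))
      (show emin (([c] : List ℕ).length + 1) ≤ e by simp [emin_eq] <;> omega)]
    rw [prep_casc (l := ([] : List ℕ))
      (show ¬(1 : Fin 2) = letterOf (([] : List ℕ).length + 3) by decide)
      (show ¬emin (([] : List ℕ).length + 3) ≤ 1 by decide)]
    rw [fixSeq_nil]
    rw [prep_inc (show (0 : Fin 2) = letterOf (([1, c + 1] : List ℕ).length + 1) by simp [letterOf])]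
    rw [prep_inc (show (1 : Fin 2) = letterOf (([c] : List ℕ).length + 1) by simp [letterOf])]
    rw [prep_push (not_eq_letterOf_one (k := ([c] : List ℕ).length + 1) (by simp [letterOf]))
      (show emin (([c] : List ℕ).length + 1) ≤ e + 1 by simp [emin_eq] <;> omega)]
    rw [prep_casc (l := ([] : List ℕ))
      (show ¬(1 : Fin 2) = letterOf (([] : List ℕ).length + 3) by decide)
      (show ¬emin (([] : List ℕ).length + 3) ≤ 1 by decide)]
    rfl
  -- Case X = e :: c :: d :: l₂
  obtain ⟨htc, htd⟩ := ht
  have htc' : emin (l₂.length + 2) ≤ c := by simpa using htc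
  have htd1 : emin (l₂.length + 1) ≤ d := by simpa using htd.1
  have hc1 : 1 ≤ c := le_trans (one_le_emin (by omega)) htc'
  rcases Nat.mod_two_eq_zero_or_one l₂.length with hpar | hpar
  · -- l₂.length even : X has odd length, top letter 0
    rcases Nat.lt_or_ge e 2 with he2 | he2
    · -- e = 1
      have he1 : e = 1 := by omega
      subst he1
      rcases l₂ with _ | ⟨f, l₃⟩
      · -- X = [1, c, d]
        rw [prep_inc (show (0 : Fin 2) = letterOf ((c :: d :: ([] : List ℕ)).length + 1)
          by simp [letterOf])]
        rw [prep_push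
          (not_eq_letterOf_zero (k := (c :: d :: ([] : List ℕ)).length + 1) (by simp [letterOf]))
          (show emin ((c :: d :: ([] : List ℕ)).length + 1) ≤ 1 + 1 by
            simp [emin_eq] <;> omega)]
        rw [prep_casc (l := [d])
          (not_eq_letterOf_one (k := ([d] : List ℕ).length + 3) (by simp [letterOf]))
          (show ¬emin (([d] : List ℕ).length + 3) ≤ 1 by simp [emin_eq] <;> omega)]
        rw [prep_casc (l := ([] : List ℕ))
          (show ¬(1 : Fin 2) = letterOf (([] : List ℕ).length + 3) by decide)
          (show ¬emin (([] : List ℕ).length + 3) ≤ 1 by decide)]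
        rw [fixSeq_nil]
        rw [prep_inc (show (0 : Fin 2) = letterOf (([1, d + 1] : List ℕ).length + 1)
          by simp [letterOf])]
        rw [prep_push
          (not_eq_letterOf_zero (k := ([1, d + 1] : List ℕ).length + 1) (by simp [letterOf]))
          (show emin (([1, d + 1] : List ℕ).length + 1) ≤ c + 1 by
            simp [emin_eq] <;> omega)]
        rw [fixSeq_cons, fixSeq_nil, show (2 : ℕ) - 1 = 1 from rfl, consP_pos (by omega)]
      · -- X = 1 :: c :: d :: f :: l₃, l₃.length odd
        simp only [List.length_cons] at hpar htc' htd1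
        have hc2 : 2 ≤ c := by rw [emin_of_three_le (by omega)] at htc'; exact htc'
        have hd1 : 1 ≤ d := le_trans (one_le_emin (by omega)) htd1
        have hW : (fixSeq (d + 1) (f + 1) l₃).length = l₃.length + 3 :=
          fixSeq_length l₃ (d + 1) f htd.2 (fun _ => by omega)
        have A1 : letterOf ((c :: d :: f :: l₃).length + 1) = 0 :=
          letterOf_odd (by simp only [List.length_cons]; omega)
        have A2 : emin ((c :: d :: f :: l₃).length + 1) = 2 := by
          simp only [List.length_cons]; exact emin_of_three_le (by omega)
        have A3 : letterOf ((d :: f :: l₃).length + 3) = 1 :=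
          letterOf_even (by simp only [List.length_cons]; omega)
        have A4 : emin ((d :: f :: l₃).length + 3) = 2 := by
          simp only [List.length_cons]; exact emin_of_three_le (by omega)
        have A5 : letterOf ((f :: l₃).length + 3) = 0 :=
          letterOf_odd (by simp only [List.length_cons]; omega)
        have A6 : emin ((f :: l₃).length + 3) = 2 := by
          simp only [List.length_cons]; exact emin_of_three_le (by omega)
        have A7 : letterOf ((fixSeq (d + 1) (f + 1) l₃).length + 1) = 0 := by
          rw [hW]; exact letterOf_odd (by omega)
        have A8 : emin ((fixSeq (d + 1) (f + 1) l₃).length + 1) = 2 := by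
          rw [hW]; exact emin_of_three_le (by omega)
        -- L side
        rw [prep_inc (show (0 : Fin 2) = letterOf ((c :: d :: f :: l₃).length + 1) by
          rw [A1])]
        rw [prep_push (show ¬(1 : Fin 2) = letterOf ((c :: d :: f :: l₃).length + 1) by
            rw [A1]; decide)
          (show emin ((c :: d :: f :: l₃).length + 1) ≤ 1 + 1 by rw [A2])]
        rw [prep_casc (l := d :: f :: l₃)
          (show ¬(0 : Fin 2) = letterOf ((d :: f :: l₃).length + 3) by rw [A3]; decide)
          (show ¬emin ((d :: f :: l₃).length + 3) ≤ 1 by rw [A4]; omega)]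
        rw [fixSeq_cons, show (2 : ℕ) - 1 = 1 from rfl, consP_pos (by omega)]
        rw [fixSeq_cons, show c + 1 - 1 = c from rfl, consP_pos (by omega)]
        -- R side
        rw [prep_casc (l := f :: l₃)
          (show ¬(1 : Fin 2) = letterOf ((f :: l₃).length + 3) by rw [A5]; decide)
          (show ¬emin ((f :: l₃).length + 3) ≤ 1 by rw [A6]; omega)]
        rw [fixSeq_cons, consP_pos (by omega)]
        rw [prep_inc (show (0 : Fin 2) = letterOf ((fixSeq (d + 1) (f + 1) l₃).length + 1) by
          rw [A7])]
        rw [show c - 1 + 1 = c by omega]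
        rw [prep_push
          (show ¬(1 : Fin 2) = letterOf ((fixSeq (d + 1) (f + 1) l₃).length + 1) by
            rw [A7]; decide)
          (show emin ((fixSeq (d + 1) (f + 1) l₃).length + 1) ≤ c by rw [A8]; omega)]
    · -- e ≥ 2
      have hZ : (fixSeq (c + 1) (d + 1) l₂).length = l₂.length + 3 :=
        fixSeq_length l₂ (c + 1) d htd (fun _ => by omega)
      have B1 : letterOf ((c :: d :: l₂).length + 1) = 0 :=
        letterOf_odd (by simp only [List.length_cons]; omega)
      have B2 : emin ((c :: d :: l₂).length + 1) = 2 := by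
        simp only [List.length_cons]; exact emin_of_three_le (by omega)
      have B3 : letterOf ((d :: l₂).length + 3) = 1 :=
        letterOf_even (by simp only [List.length_cons]; omega)
      have B4 : emin ((d :: l₂).length + 3) = 2 := by
        simp only [List.length_cons]; exact emin_of_three_le (by omega)
      have B5 : letterOf ((fixSeq (c + 1) (d + 1) l₂).length + 1) = 1 := by
        rw [hZ]; exact letterOf_even (by omega)
      -- L side
      rw [prep_inc (show (0 : Fin 2) = letterOf ((c :: d :: l₂).length + 1) by rw [B1])]
      rw [prep_push (show ¬(1 : Fin 2) = letterOf ((c :: d :: l₂).length + 1) by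
          rw [B1]; decide)
        (show emin ((c :: d :: l₂).length + 1) ≤ e + 1 by rw [B2]; omega)]
      rw [prep_casc (l := d :: l₂)
        (show ¬(0 : Fin 2) = letterOf ((d :: l₂).length + 3) by rw [B3]; decide)
        (show ¬emin ((d :: l₂).length + 3) ≤ 1 by rw [B4]; omega)]
      rw [fixSeq_cons (e + 1) (c + 1) d l₂, show e + 1 - 1 = e from rfl,
        consP_pos (show e ≠ 0 by omega) (fixSeq (c + 1) (d + 1) l₂)]
      -- R side
      rw [prep_push (show ¬(1 : Fin 2) = letterOf ((c :: d :: l₂).length + 1) by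
          rw [B1]; decide)
        (show emin ((c :: d :: l₂).length + 1) ≤ e by rw [B2]; omega)]
      rw [prep_casc (l := d :: l₂)
        (show ¬(0 : Fin 2) = letterOf ((d :: l₂).length + 3) by rw [B3]; decide)
        (show ¬emin ((d :: l₂).length + 3) ≤ 1 by rw [B4]; omega)]
      rw [fixSeq_cons, consP_pos (by omega)]
      rw [prep_inc (show (1 : Fin 2) = letterOf ((fixSeq (c + 1) (d + 1) l₂).length + 1) by
        rw [B5])]
      rw [show e - 1 + 1 = e by omega]
  · -- l₂.length odd : X has even length, top letter 1; l₂ = f :: l₃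
    rcases l₂ with _ | ⟨f, l₃⟩
    · simp at hpar
    simp only [List.length_cons] at hpar htc' htd1
    have hc2 : 2 ≤ c := by rw [emin_of_three_le (by omega)] at htc'; exact htc'
    have hd1 : 1 ≤ d := le_trans (one_le_emin (by omega)) htd1
    have C1 : letterOf ((c :: d :: f :: l₃).length + 1) = 1 :=
      letterOf_even (by simp only [List.length_cons]; omega)
    have C2 : emin ((c :: d :: f :: l₃).length + 1) = 2 := by
      simp only [List.length_cons]; exact emin_of_three_le (by omega)
    have C3 : letterOf ((d :: f :: l₃).length + 3) = 0 :=
      letterOf_odd (by simp only [List.length_cons]; omega)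
    have C4 : emin ((d :: f :: l₃).length + 3) = 2 := by
      simp only [List.length_cons]; exact emin_of_three_le (by omega)
    rcases Nat.lt_or_ge e 2 with he2 | he2
    · -- e = 1
      have he1 : e = 1 := by omega
      subst he1
      have hW : (fixSeq (d + 1) (f + 1) l₃).length = l₃.length + 3 :=
        fixSeq_length l₃ (d + 1) f htd.2 (fun _ => by omega)
      have C5 : letterOf ((f :: l₃).length + 3) = 1 :=
        letterOf_even (by simp only [List.length_cons]; omega)
      have C6 : emin ((f :: l₃).length + 3) = 2 := by
        simp only [List.length_cons]; exact emin_of_three_le (by omega)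
      have C7 : letterOf ((fixSeq (d + 1) (f + 1) l₃).length + 1) = 1 := by
        rw [hW]; exact letterOf_even (by omega)
      have C8 : emin ((fixSeq (d + 1) (f + 1) l₃).length + 1) = 2 := by
        rw [hW]; exact emin_of_three_le (by omega)
      -- L side
      rw [prep_casc (l := f :: l₃)
        (show ¬(0 : Fin 2) = letterOf ((f :: l₃).length + 3) by rw [C5]; decide)
        (show ¬emin ((f :: l₃).length + 3) ≤ 1 by rw [C6]; omega)]
      rw [fixSeq_cons, consP_pos (by omega)]
      rw [prep_inc (show (1 : Fin 2) = letterOf ((fixSeq (d + 1) (f + 1) l₃).length + 1) by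
        rw [C7])]
      rw [show c - 1 + 1 = c by omega]
      rw [prep_push
        (show ¬(0 : Fin 2) = letterOf ((fixSeq (d + 1) (f + 1) l₃).length + 1) by
          rw [C7]; decide)
        (show emin ((fixSeq (d + 1) (f + 1) l₃).length + 1) ≤ c by rw [C8]; omega)]
      -- R side
      rw [prep_inc (show (1 : Fin 2) = letterOf ((c :: d :: f :: l₃).length + 1) by rw [C1])]
      rw [prep_push (show ¬(0 : Fin 2) = letterOf ((c :: d :: f :: l₃).length + 1) by
          rw [C1]; decide)
        (show emin ((c :: d :: f :: l₃).length + 1) ≤ 1 + 1 by rw [C2])]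
      rw [prep_casc (l := d :: f :: l₃)
        (show ¬(1 : Fin 2) = letterOf ((d :: f :: l₃).length + 3) by rw [C3]; decide)
        (show ¬emin ((d :: f :: l₃).length + 3) ≤ 1 by rw [C4]; omega)]
      rw [fixSeq_cons, show (2 : ℕ) - 1 = 1 from rfl, consP_pos (by omega)]
      rw [fixSeq_cons, show c + 1 - 1 = c from rfl, consP_pos (by omega)]
    · -- e ≥ 2
      have hZ : (fixSeq (c + 1) (d + 1) (f :: l₃)).length = (f :: l₃).length + 3 :=
        fixSeq_length (f :: l₃) (c + 1) d htd (fun _ => by omega)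
      have C5 : letterOf ((fixSeq (c + 1) (d + 1) (f :: l₃)).length + 1) = 0 := by
        rw [hZ]; exact letterOf_odd (by simp only [List.length_cons]; omega)
      -- L side
      rw [prep_push (show ¬(0 : Fin 2) = letterOf ((c :: d :: f :: l₃).length + 1) by
          rw [C1]; decide)
        (show emin ((c :: d :: f :: l₃).length + 1) ≤ e by rw [C2]; omega)]
      rw [prep_casc (l := d :: f :: l₃)
        (show ¬(1 : Fin 2) = letterOf ((d :: f :: l₃).length + 3) by rw [C3]; decide)
        (show ¬emin ((d :: f :: l₃).length + 3) ≤ 1 by rw [C4]; omega)]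
      rw [fixSeq_cons, consP_pos (by omega)]
      rw [prep_inc (show (0 : Fin 2) =
        letterOf ((fixSeq (c + 1) (d + 1) (f :: l₃)).length + 1) by rw [C5])]
      rw [show e - 1 + 1 = e by omega]
      -- R side
      rw [prep_inc (show (1 : Fin 2) = letterOf ((c :: d :: f :: l₃).length + 1) by rw [C1])]
      rw [prep_push (show ¬(0 : Fin 2) = letterOf ((c :: d :: f :: l₃).length + 1) by
          rw [C1]; decide)
        (show emin ((c :: d :: f :: l₃).length + 1) ≤ e + 1 by rw [C2]; omega)]
      rw [prep_casc (l := d :: f :: l₃)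
        (show ¬(1 : Fin 2) = letterOf ((d :: f :: l₃).length + 3) by rw [C3]; decide)
        (show ¬emin ((d :: f :: l₃).length + 3) ≤ 1 by rw [C4]; omega)]
      rw [fixSeq_cons (e + 1) (c + 1) d (f :: l₃), show e + 1 - 1 = e from rfl,
        consP_pos (show e ≠ 0 by omega) (fixSeq (c + 1) (d + 1) (f :: l₃))]


/-! ### Invariance of the normal form under the braid congruence -/

/-- The congruence of "same normal form relative to any normal accumulator". -/
def nfCon : Con (FreeMonoid (Fin 2)) where
  r u v := ∀ X : List ℕ, (X = [] ∨ NormSeq X) →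
    List.foldr prep X (FreeMonoid.toList u) = List.foldr prep X (FreeMonoid.toList v)
  iseqv := ⟨fun _ _ _ => rfl, fun h X hX => (h X hX).symm,
    fun h1 h2 X hX => (h1 X hX).trans (h2 X hX)⟩
  mul' := by
    intro w x y z h1 h2 X hX
    simp only [FreeMonoid.toList_mul, List.foldr_append]
    rw [h2 X hX]
    exact h1 _ (foldr_normOrNil _ X hX)

lemma braidCon_le_nfCon : braidCon ≤ nfCon := by
  refine Con.conGen_le.mpr ?_
  rintro u v ⟨hu, hv⟩
  subst hu; subst hv
  intro X hX
  exact hexagon X hX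

/-- The length congruence. -/
def lenCon : Con (FreeMonoid (Fin 2)) where
  r u v := (FreeMonoid.toList u).length = (FreeMonoid.toList v).length
  iseqv := ⟨fun _ => rfl, Eq.symm, Eq.trans⟩
  mul' := by
    intro w x y z h1 h2
    have h1' : (FreeMonoid.toList w).length = (FreeMonoid.toList x).length := h1
    have h2' : (FreeMonoid.toList y).length = (FreeMonoid.toList z).length := h2
    show (FreeMonoid.toList (w * y)).length = (FreeMonoid.toList (x * z)).length
    simp only [FreeMonoid.toList_mul, List.length_append, h1', h2']

lemma braidCon_le_lenCon : braidCon ≤ lenCon := by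
  refine Con.conGen_le.mpr ?_
  rintro u v ⟨hu, hv⟩
  subst hu; subst hv
  rfl

lemma mkw_eq_one {w : List (Fin 2)} (h : mkw w = 1) : w = [] := by
  have h1 : braidCon (FreeMonoid.ofList w) (FreeMonoid.ofList []) := by
    refine (Con.eq _).mp ?_
    exact h
  have h2 : (FreeMonoid.toList (FreeMonoid.ofList w)).length =
      (FreeMonoid.toList (FreeMonoid.ofList ([] : List (Fin 2)))).length :=
    braidCon_le_lenCon h1
  simpa using h2

/-! ### Bridge between `IsNormalSeq` and `NormSeq` -/

lemma expAt_cons_top (x : ℕ) (l : List ℕ) : expAt (x :: l) (l.length + 1) = x := by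
  simp [expAt]

lemma expAt_cons (x : ℕ) (l : List ℕ) (k : ℕ) (h1 : 1 ≤ k) (h2 : k ≤ l.length) :
    expAt (x :: l) k = expAt l k := by
  unfold expAt
  rw [show (x :: l).length - k = (l.length - k) + 1 by simp; omega, List.getD_cons_succ]

lemma tailOK_iff (l : List ℕ) :
    tailOK l ↔ ∀ k, 1 ≤ k → k ≤ l.length → emin k ≤ expAt l k := by
  induction l with
  | nil =>
    simp only [tailOK, List.length_nil]
    constructor
    · intro _ k hk1 hk2; omega
    · intro _; trivial
  | cons x l ih =>
    constructor
    · rintro ⟨h1, h2⟩ k hk1 hk2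
      rcases Nat.lt_or_ge k (l.length + 1) with hlt | hge
      · rw [expAt_cons x l k hk1 (by omega)]
        exact (ih.mp h2) k hk1 (by omega)
      · have hk : k = l.length + 1 := by simp at hk2; omega
        subst hk
        rw [expAt_cons_top]
        exact h1
    · intro h
      refine ⟨?_, ih.mpr ?_⟩
      · have := h (l.length + 1) (by omega) (by simp)
        rwa [expAt_cons_top] at this
      · intro k hk1 hk2
        have := h k hk1 (by simp; omega)
        rwa [expAt_cons x l k hk1 hk2] at this

lemma isNormalSeq_iff (E : List ℕ) : IsNormalSeq E ↔ NormSeq E := by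
  rcases E with _ | ⟨e, rest⟩
  · simp [IsNormalSeq, NormSeq]
  · constructor
    · rintro ⟨-, h1, h2⟩
      refine ⟨?_, (tailOK_iff rest).mpr ?_⟩
      · have := h1
        rw [show (e :: rest).length = rest.length + 1 from rfl, expAt_cons_top] at this
        exact this
      · intro k hk1 hk2
        have h3 := h2 k hk1 (by simp; omega)
        rwa [expAt_cons e rest k hk1 hk2] at h3
    · rintro ⟨h1, h2⟩
      refine ⟨by simp, ?_, ?_⟩
      · rw [show (e :: rest).length = rest.length + 1 from rfl, expAt_cons_top]
        exact h1
      · intro k hk1 hk2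
        rw [expAt_cons e rest k hk1 (by simp at hk2; omega)]
        exact (tailOK_iff rest).mp h2 k hk1 (by simp at hk2; omega)


/-- Every nontrivial element of the positive 3-strand braid monoid B₃⁺ is
represented by exactly one ϕ-normal word on the alphabet {σ1, σ2}. -/
theorem phi_normal_exists_unique (b : B3P) (hb : b ≠ 1) :
    ∃! w : List (Fin 2), IsPhiNormalWord w ∧ mkw w = b := by
  obtain ⟨x, hx⟩ := Con.mk'_surjective (c := braidCon) b
  set w := FreeMonoid.toList x with hwdef
  have hmkw : mkw w = b := by
    rw [show mkw w = braidCon.mk' x from rfl, hx]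
  have hwne : w ≠ [] := by
    intro h0
    apply hb
    rw [← hmkw, h0]
    rfl
  refine ⟨wordOfExpSeq (nfList w),
    ⟨⟨nfList w, (isNormalSeq_iff _).mpr (nfList_norm hwne), rfl⟩,
      by rw [nfList_mkw w, hmkw]⟩, ?_⟩
  rintro y ⟨⟨E, hE, rfl⟩, hy⟩
  have hEn : NormSeq E := (isNormalSeq_iff _).mp hE
  have hcon : braidCon (FreeMonoid.ofList (wordOfExpSeq E)) (FreeMonoid.ofList w) :=
    (Con.eq _).mp (show braidCon.mk' _ = braidCon.mk' _ from hy.trans hmkw.symm)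
  have hnf0 : ∀ X : List ℕ, (X = [] ∨ NormSeq X) →
      List.foldr prep X (FreeMonoid.toList (FreeMonoid.ofList (wordOfExpSeq E))) =
        List.foldr prep X (FreeMonoid.toList (FreeMonoid.ofList w)) :=
    braidCon_le_nfCon hcon
  have hnf' : nfList (wordOfExpSeq E) = nfList w := hnf0 [] (Or.inl rfl)
  rw [show nfList (wordOfExpSeq E) = E from nf_word E hEn] at hnf'
  rw [hnf']

end Braid3
end

section
/- For every function f : ℕ → ℕ and every k ∈ ℕ, there exists m ∈ ℕ such that there is no (k, f)-simple strictly descending sequence (b_0, …, b_m) of length m in B_3^+; that is, every (k, f)-simple descending sequence (b_0, …, b_{m'}) satisfies m' < m. -/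
namespace Braid3

namespace Dyn


def phi (r : ℚ) : ℚ := if r < 1/4 then r + 1/4 else if r < 1/2 then 2*r else r/2 + 3/4

lemma phi1 {x : ℚ} (h : x < 1/4) : phi x = x + 1/4 := if_pos h
lemma phi2 {x : ℚ} (h1 : ¬ x < 1/4) (h2 : x < 1/2) : phi x = 2*x := by
  unfold phi; rw [if_neg h1, if_pos h2]
lemma phi3 {x : ℚ} (h2 : ¬ x < 1/2) : phi x = x/2 + 3/4 := by
  unfold phi; rw [if_neg (by intro h; exact h2 (by linarith)), if_neg h2]

lemma phi_le (r : ℚ) : phi r ≤ r + 1/2 := by unfold phi; split_ifs <;> linarith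
lemma phi_lb {r : ℚ} (h0 : 0 ≤ r) : 1/4 ≤ phi r := by unfold phi; split_ifs <;> linarith
lemma phi_ub {r : ℚ} (h1 : r < 1) : phi r < 5/4 := by unfold phi; split_ifs <;> linarith
lemma phi_mono {r s : ℚ} (h0 : 0 ≤ r) (hrs : r < s) (h1 : s < 1) : phi r < phi s := by
  unfold phi; split_ifs <;> linarith

def beta (x : ℚ) : ℚ := ⌊x⌋ + phi (Int.fract x)

lemma beta_eq {x : ℚ} (h0 : 0 ≤ x) (h1 : x < 1) : beta x = phi x := by
  unfold beta
  have hf : ⌊x⌋ = 0 := Int.floor_eq_zero_iff.2 ⟨h0, h1⟩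
  rw [Int.fract, hf]
  push_cast
  ring_nf

lemma beta_add_int (x : ℚ) (n : ℤ) : beta (x + n) = beta x + n := by
  unfold beta
  rw [Int.floor_add_intCast, Int.fract_add_intCast]
  push_cast
  ring

lemma beta_le (x : ℚ) : beta x ≤ x + 1/2 := by
  have h := phi_le (Int.fract x)
  have h2 : (⌊x⌋ : ℚ) + Int.fract x = x := by rw [Int.fract]; ring
  unfold beta; linarith

lemma lt_beta (x : ℚ) : x < beta x := by
  have h := phi_lb (Int.fract_nonneg x)
  have h3 : Int.fract x < phi (Int.fract x) := by
    unfold phi; have := Int.fract_nonneg x; have := Int.fract_lt_one x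
    split_ifs <;> linarith
  have h2 : (⌊x⌋ : ℚ) + Int.fract x = x := by rw [Int.fract]; ring
  unfold beta; linarith

lemma beta_mono : StrictMono beta := by
  intro x y hxy
  rcases lt_or_ge ⌊x⌋ ⌊y⌋ with h | h
  · have h1 : beta x < ⌊x⌋ + 5/4 := by
      unfold beta; have := phi_ub (Int.fract_lt_one x); linarith
    have h2 : (⌊y⌋ : ℚ) + 1/4 ≤ beta y := by
      unfold beta; have := phi_lb (Int.fract_nonneg y); linarith
    have h3 : (⌊x⌋ : ℚ) + 1 ≤ (⌊y⌋ : ℚ) := by exact_mod_cast h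
    linarith
  · have heq : ⌊x⌋ = ⌊y⌋ := le_antisymm (Int.floor_le_floor hxy.le) h
    have hfr : Int.fract x < Int.fract y := by
      unfold Int.fract; rw [heq]; linarith
    have := phi_mono (Int.fract_nonneg x) hfr (Int.fract_lt_one y)
    unfold beta; rw [heq]; linarith

lemma beta01 {x : ℚ} (h0 : 0 ≤ x) (h1 : x < 1) : beta (beta (beta x)) = x + 1 := by
  rcases lt_or_ge x (1/4) with hA | hA
  · rw [beta_eq (x := x) h0 h1, phi1 hA,
      beta_eq (x := x + 1/4) (by linarith) (by linarith),
      phi2 (x := x + 1/4) (by linarith) (by linarith),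
      beta_eq (x := 2*(x + 1/4)) (by linarith) (by linarith),
      phi3 (x := 2*(x + 1/4)) (by linarith)]
    ring
  · rcases lt_or_ge x (1/2) with hB | hB
    · rw [beta_eq (x := x) h0 h1, phi2 (by linarith) hB,
        beta_eq (x := 2*x) (by linarith) (by linarith), phi3 (x := 2*x) (by linarith)]
      have he : 2*x/2 + 3/4 = (x - 1/4) + ((1:ℤ):ℚ) := by push_cast; ring
      rw [he, beta_add_int, beta_eq (x := x - 1/4) (by linarith) (by linarith),
        phi1 (by linarith)]
      push_cast; ring
    · rw [beta_eq (x := x) h0 h1, phi3 (by linarith)]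
      have he : x/2 + 3/4 = (x/2 - 1/4) + ((1:ℤ):ℚ) := by push_cast; ring
      rw [he, beta_add_int, beta_eq (x := x/2 - 1/4) (by linarith) (by linarith),
        phi1 (by linarith)]
      have he2 : x/2 - 1/4 + 1/4 + ((1:ℤ):ℚ) = (x/2) + ((1:ℤ):ℚ) := by push_cast; ring
      rw [he2, beta_add_int, beta_eq (x := x/2) (by linarith) (by linarith),
        phi2 (x := x/2) (by linarith) (by linarith)]
      push_cast; ring

lemma beta_cube (x : ℚ) : beta (beta (beta x)) = x + 1 := by
  have h := Int.fract_nonneg x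
  have h' := Int.fract_lt_one x
  have key := beta01 h h'
  have hx : x = Int.fract x + (⌊x⌋ : ℤ) := by rw [Int.fract]; push_cast; ring
  calc beta (beta (beta x)) = beta (beta (beta (Int.fract x + ((⌊x⌋ : ℤ) : ℚ)))) := by rw [← hx]
  _ = beta (beta (beta (Int.fract x))) + (⌊x⌋ : ℤ) := by
      rw [beta_add_int, beta_add_int, beta_add_int]
  _ = Int.fract x + 1 + (⌊x⌋ : ℤ) := by rw [key]
  _ = x + 1 := by rw [Int.fract]; push_cast; ring

def betaInv (x : ℚ) : ℚ := beta (beta (x - 1))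

lemma beta_betaInv (x : ℚ) : beta (betaInv x) = x := by
  unfold betaInv; rw [beta_cube]; ring

lemma betaInv_beta (x : ℚ) : betaInv (beta x) = x := by
  unfold betaInv
  have h : beta x - 1 = beta (x - 1) := by
    have := beta_add_int (x - 1) 1
    push_cast at this
    rw [show x - 1 + 1 = x by ring] at this
    linarith
  rw [h, beta_cube]; ring

def bPerm : Equiv.Perm ℚ := ⟨beta, betaInv, betaInv_beta, beta_betaInv⟩
def aPerm : Equiv.Perm ℚ := ⟨fun x => x + 1/2, fun x => x - 1/2,
  fun x => by ring, fun x => by ring⟩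

lemma a_cube_eq_b : aPerm * aPerm = bPerm * bPerm * bPerm := by
  ext x
  show aPerm (aPerm x) = bPerm (bPerm (bPerm x))
  show (x + 1/2) + 1/2 = beta (beta (beta x))
  rw [beta_cube]; ring

/-- The subgroup of strictly monotone permutations of ℚ. -/
def SM : Subgroup (Equiv.Perm ℚ) where
  carrier := {π | StrictMono ⇑π}
  one_mem' := fun _ _ h => h
  mul_mem' := by
    intro a b ha hb
    have : StrictMono (⇑a ∘ ⇑b) := ha.comp hb
    simpa [Equiv.Perm.coe_mul] using this
  inv_mem' := by
    intro a ha x y hxy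
    have h1 : a ((a⁻¹ : Equiv.Perm ℚ) x) < a ((a⁻¹ : Equiv.Perm ℚ) y) := by
      simpa using hxy
    exact ha.lt_iff_lt.mp h1

def Ae : SM := ⟨aPerm, fun x y h => by show x + 1/2 < y + 1/2; linarith⟩
def Be : SM := ⟨bPerm, beta_mono⟩
def FF : SM := Be⁻¹ * Ae
def GG : SM := Ae⁻¹ * Be * Be

lemma braid_perm_rel : FF * GG * FF = GG * FF * GG := by
  have h : Ae = Ae⁻¹ * (Be * Be * Be) := by
    have h2 : Ae * Ae = Be * Be * Be := Subtype.ext a_cube_eq_b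
    rw [← h2]; group
  unfold FF GG
  calc Be⁻¹ * Ae * (Ae⁻¹ * Be * Be) * (Be⁻¹ * Ae) = Ae := by group
  _ = Ae⁻¹ * (Be * Be * Be) := h
  _ = Ae⁻¹ * Be * Be * (Be⁻¹ * Ae) * (Ae⁻¹ * Be * Be) := by group


/-! ### The action of B3 -/

noncomputable def rho : B3 →* SM :=
  PresentedGroup.toGroup (f := fun i : Fin 2 => if i = 0 then FF else GG) (by
    intro r hr
    have hr' : r = FreeGroup.of 0 * FreeGroup.of 1 * FreeGroup.of 0 *
        (FreeGroup.of 1 * FreeGroup.of 0 * FreeGroup.of 1)⁻¹ := hr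
    subst hr'
    simp only [map_mul, map_inv, FreeGroup.lift_apply_of]
    norm_num
    rw [braid_perm_rel]
    group)

lemma rho_g0 : rho (g 0) = FF := by
  unfold rho g; rw [PresentedGroup.toGroup.of]; norm_num

lemma rho_g1 : rho (g 1) = GG := by
  unfold rho g; rw [PresentedGroup.toGroup.of]; norm_num

/-- The action of B3 on ℚ. -/
noncomputable def act (c : B3) : ℚ → ℚ := ⇑((rho c : SM) : Equiv.Perm ℚ)

lemma act_mul (c d : B3) (x : ℚ) : act (c * d) x = act c (act d x) := by
  unfold act; rw [map_mul]; rfl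

lemma act_strictMono (c : B3) : StrictMono (act c) := (rho c).2

def Ffun (x : ℚ) : ℚ := betaInv (x + 1/2)
noncomputable def Gfun (x : ℚ) : ℚ := beta (beta x) - 1/2

lemma act_g0 (x : ℚ) : act (g 0) x = Ffun x := by
  unfold act; rw [rho_g0]; rfl

lemma act_g0_inv (x : ℚ) : act (g 0)⁻¹ (Ffun x) = x := by
  have h : act (g 0)⁻¹ (act (g 0) x) = x := by
    rw [← act_mul, inv_mul_cancel]
    unfold act; rw [map_one]; rfl
  rw [← act_g0]; exact h

lemma act_g1 (x : ℚ) : act (g 1) x = Gfun x := by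
  unfold act; rw [rho_g1]; rfl

lemma beta_zero : beta 0 = 1/4 := by
  rw [beta_eq (x := (0:ℚ)) le_rfl (by norm_num), phi1 (by norm_num)]; norm_num

lemma beta_quarter : beta (1/4) = 1/2 := by
  rw [beta_eq (x := (1:ℚ)/4) (by norm_num) (by norm_num),
    phi2 (x := (1:ℚ)/4) (by norm_num) (by norm_num)]
  norm_num

lemma beta_one : beta 1 = 5/4 := by
  have h : (1:ℚ) = 0 + ((1:ℤ):ℚ) := by norm_num
  rw [h, beta_add_int, beta_zero]; norm_num

lemma Ffun_x0 : Ffun (1/2) = 1/2 := by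
  unfold Ffun betaInv
  norm_num
  rw [beta_zero, beta_quarter]

lemma Ffun_ge (x : ℚ) : x ≤ Ffun x := by
  have h : beta x ≤ beta (Ffun x) := by
    unfold Ffun; rw [beta_betaInv]; exact beta_le x
  exact (beta_mono.le_iff_le).mp h

lemma Gfun_ge (x : ℚ) : x ≤ Gfun x := by
  have h1 := beta_le (beta (beta x))
  rw [beta_cube] at h1
  unfold Gfun; linarith

lemma Gfun_x0 : (1:ℚ)/2 < Gfun (1/2) := by
  unfold Gfun
  rw [beta_eq (x := (1:ℚ)/2) (by norm_num) (by norm_num), phi3 (by norm_num)]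
  norm_num
  rw [beta_one]
  norm_num

lemma Ffun_mono : StrictMono Ffun := by
  intro x y h
  rw [← act_g0, ← act_g0]
  exact (act_strictMono (g 0)) h

lemma Gfun_mono : StrictMono Gfun := by
  intro x y h
  rw [← act_g1, ← act_g1]
  exact (act_strictMono (g 1)) h



/-! ### Signed words acting on ℚ -/

lemma act_one (x : ℚ) : act 1 x = x := by unfold act; rw [map_one]; rfl

lemma evalSW_nil : evalSW [] = 1 := rfl

lemma evalSW_cons (l : Fin 2 × Bool) (w : List (Fin 2 × Bool)) :
    evalSW (l :: w) = (if l.2 then g l.1 else (g l.1)⁻¹) * evalSW w := by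
  unfold evalSW; rw [List.map_cons, List.prod_cons]

lemma fin2_cases (i : Fin 2) : i = 0 ∨ i = 1 := by
  rcases i with ⟨v, hv⟩
  interval_cases v
  · left; rfl
  · right; rfl

lemma act_g1_inv (x : ℚ) : act (g 1)⁻¹ (Gfun x) = x := by
  have h : act (g 1)⁻¹ (act (g 1) x) = x := by
    rw [← act_mul, inv_mul_cancel, act_one]
  rw [← act_g1]; exact h

lemma sigma_invariant (w : List (Fin 2 × Bool)) (hnf : ((1 : Fin 2), false) ∉ w) :
    (1/2 : ℚ) ≤ act (evalSW w) (1/2) ∧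
      (((1 : Fin 2), true) ∈ w → (1/2 : ℚ) < act (evalSW w) (1/2)) := by
  induction w with
  | nil => refine ⟨by rw [evalSW_nil, act_one], ?_⟩; intro h; simp at h
  | cons l t ih =>
    have hnf' : ((1 : Fin 2), false) ∉ t := fun h => hnf (List.mem_cons_of_mem _ h)
    have hl : l ≠ ((1 : Fin 2), false) := fun h => hnf (h ▸ List.mem_cons_self)
    obtain ⟨hy, hy'⟩ := ih hnf'
    set y := act (evalSW t) (1/2) with hydef
    rw [evalSW_cons, act_mul]
    obtain ⟨i, s⟩ := l
    have hmemt : (((1:Fin 2), true) ∈ (((i, s)) :: t)) → (((1:Fin 2), true) = (i,s)) ∨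
        ((1:Fin 2), true) ∈ t := fun h => List.mem_cons.mp h
    have keyFix : ∀ c : B3, act c (1/2 : ℚ) = 1/2 →
        ((1/2 : ℚ) ≤ act c y ∧ (((1:Fin 2), true) ∈ t → (1/2:ℚ) < act c y)) := by
      intro c hc
      constructor
      · rcases eq_or_lt_of_le hy with h | h
        · rw [← h, hc]
        · exact le_of_lt (by rw [← hc]; exact (act_strictMono c) h)
      · intro hm
        rw [← hc]; exact (act_strictMono c) (hy' hm)
    rcases fin2_cases i with rfl | rfl
    · cases s
      · -- (0, false) : acts by F⁻¹ which fixes 1/2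
        rw [if_neg (by decide)]
        have h0 : act (g 0)⁻¹ (1/2 : ℚ) = 1/2 := by
          have := act_g0_inv (1/2); rwa [Ffun_x0] at this
        obtain ⟨hA, hB⟩ := keyFix ((g 0)⁻¹) h0
        refine ⟨hA, fun hm => hB ?_⟩
        rcases hmemt hm with h | h
        · exact absurd h (by simp)
        · exact h
      · -- (0, true) : acts by F which fixes 1/2
        rw [if_pos (by decide)]
        have h0 : act (g 0) (1/2 : ℚ) = 1/2 := by rw [act_g0, Ffun_x0]
        obtain ⟨hA, hB⟩ := keyFix (g 0) h0
        refine ⟨hA, fun hm => hB ?_⟩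
        rcases hmemt hm with h | h
        · exact absurd h (by simp)
        · exact h
    · cases s
      · exact absurd rfl hl
      · -- (1, true) : acts by G, strictly increasing at 1/2
        rw [if_pos (by decide), act_g1]
        have h1 : Gfun (1/2 : ℚ) ≤ Gfun y := by
          rcases eq_or_lt_of_le hy with h | h
          · rw [h]
          · exact le_of_lt (Gfun_mono h)
        exact ⟨le_trans (le_of_lt Gfun_x0) h1, fun _ => lt_of_lt_of_le Gfun_x0 h1⟩


/-! ### The exponent sum homomorphism -/

noncomputable def es : B3 →* Multiplicative ℤ :=
  PresentedGroup.toGroup (f := fun _ : Fin 2 => Multiplicative.ofAdd 1) (by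
    intro r hr
    have hr' : r = FreeGroup.of 0 * FreeGroup.of 1 * FreeGroup.of 0 *
        (FreeGroup.of 1 * FreeGroup.of 0 * FreeGroup.of 1)⁻¹ := hr
    subst hr'
    simp only [map_mul, map_inv, FreeGroup.lift_apply_of]
    group)

lemma es_g (i : Fin 2) : es (g i) = Multiplicative.ofAdd 1 := by
  unfold es g; rw [PresentedGroup.toGroup.of]

/-- Exponent sum as an integer. -/
noncomputable def zs (c : B3) : ℤ := Multiplicative.toAdd (es c)

lemma zs_mul (c d : B3) : zs (c * d) = zs c + zs d := by
  unfold zs; rw [map_mul]; rfl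

lemma zs_g (i : Fin 2) : zs (g i) = 1 := by unfold zs; rw [es_g]; rfl

/-! ### Words and the monoid -/

lemma mkw_nil : mkw [] = 1 := rfl

lemma mkw_cons (i : Fin 2) (w : List (Fin 2)) : mkw (i :: w) = mkw [i] * mkw w := by
  unfold mkw
  rw [← map_mul]
  rfl

lemma iota_mkw_single (i : Fin 2) : ι (mkw [i]) = g i := by
  unfold ι mkw
  erw [Con.lift_mk']
  exact FreeMonoid.lift_eval_of _ i

lemma exists_word (b : B3P) : ∃ w : List (Fin 2), mkw w = b := by
  obtain ⟨z, hz⟩ := Con.mk'_surjective (c := braidCon) b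
  exact ⟨FreeMonoid.toList z, by unfold mkw; rw [FreeMonoid.ofList_toList]; exact hz⟩

lemma zs_mkw (w : List (Fin 2)) : zs (ι (mkw w)) = w.length := by
  induction w with
  | nil => rw [mkw_nil, map_one]; unfold zs; rw [map_one]; rfl
  | cons i t ih =>
    rw [mkw_cons, map_mul, zs_mul, iota_mkw_single, zs_g, ih]
    simp [List.length_cons]
    ring

/-! ### The potential functions μ and λ -/

noncomputable def Sfun (i : Fin 2) : ℚ → ℚ := if i = 0 then Ffun else Gfun

lemma Sfun_mono (i : Fin 2) : StrictMono (Sfun i) := by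
  unfold Sfun; split_ifs
  · exact Ffun_mono
  · exact Gfun_mono

lemma Sfun_ge (i : Fin 2) (x : ℚ) : x ≤ Sfun i x := by
  unfold Sfun; split_ifs
  · exact Ffun_ge x
  · exact Gfun_ge x

noncomputable def posQ (w : List (Fin 2)) : ℚ := w.foldr (fun i x => Sfun i x) (1/2)

lemma posQ_nil : posQ [] = 1/2 := rfl
lemma posQ_cons (i : Fin 2) (w : List (Fin 2)) : posQ (i :: w) = Sfun i (posQ w) := rfl

lemma posQ_ge (w : List (Fin 2)) : (1/2 : ℚ) ≤ posQ w := by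
  induction w with
  | nil => exact le_refl _
  | cons i t ih => rw [posQ_cons]; exact le_trans ih (Sfun_ge i _)

noncomputable def mu (b : B3P) : ℚ := act (ι b) (1/2)
noncomputable def lam (b : B3P) : ℤ := zs (ι b)

lemma act_iota_mkw (w : List (Fin 2)) (x : ℚ) :
    act (ι (mkw w)) x = (w.foldr (fun i z => Sfun i z) x) := by
  induction w with
  | nil => rw [mkw_nil, map_one, act_one]; rfl
  | cons i t ih =>
    rw [mkw_cons, map_mul, act_mul, iota_mkw_single, ih]
    show act (g i) _ = Sfun i _
    unfold Sfun
    rcases fin2_cases i with rfl | rfl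
    · rw [act_g0, if_pos rfl]
    · rw [act_g1, if_neg (by decide)]

lemma mu_mkw (w : List (Fin 2)) : mu (mkw w) = posQ w := act_iota_mkw w (1/2)

lemma mu_realizable (b : B3P) : ∃ w, posQ w = mu b := by
  obtain ⟨w, hw⟩ := exists_word b
  exact ⟨w, by rw [← hw, mu_mkw]⟩

lemma lam_nonneg (b : B3P) : 0 ≤ lam b := by
  obtain ⟨w, hw⟩ := exists_word b
  rw [← hw]
  unfold lam
  rw [zs_mkw]
  exact Int.ofNat_nonneg _

/-- Key step lemma: a descent in the braid order decreases (μ, λ) lexicographically. -/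
lemma step_lemma {x y : B3P} (h : blt x y) :
    mu x < mu y ∨ (mu x = mu y ∧ lam x < lam y) := by
  obtain ⟨w, hpos, heval⟩ := h
  have hy : ι y = ι x * evalSW w := by
    rw [heval]; rw [mul_inv_cancel_left]
  obtain ⟨i, htrue, hfalse, hmax⟩ := hpos
  rcases fin2_cases i with rfl | rfl
  · -- σ1-positive : all letters are (0, true)
    have hall : ∀ l ∈ w, l = ((0 : Fin 2), true) := by
      intro l hl
      have h1 : l.1 = 0 := Fin.le_zero_iff.mp (hmax l hl)
      have h2 : l.2 = true := by
        cases hsnd : l.2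
        · exfalso; apply hfalse
          have : l = ((0 : Fin 2), false) := Prod.ext h1 hsnd
          rwa [this] at hl
        · rfl
      exact Prod.ext h1 h2
    have hfix : act (evalSW w) (1/2) = 1/2 ∧ zs (evalSW w) = w.length := by
      clear htrue hfalse hmax heval hy
      induction w with
      | nil => exact ⟨by rw [evalSW_nil, act_one], by rw [evalSW_nil]; unfold zs; rw [map_one]; rfl⟩
      | cons l t ih =>
        have hl : l = ((0:Fin 2), true) := hall l (List.mem_cons_self)
        obtain ⟨ih1, ih2⟩ := ih (fun l hl => hall l (List.mem_cons_of_mem _ hl))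
        subst hl
        rw [evalSW_cons, if_pos (by decide), act_mul, ih1, act_g0, Ffun_x0, zs_mul, zs_g, ih2]
        exact ⟨rfl, by simp [List.length_cons]; ring⟩
    right
    constructor
    · unfold mu; rw [hy, act_mul, hfix.1]
    · unfold lam
      rw [hy, zs_mul, hfix.2]
      have hw : 0 < w.length := List.length_pos_iff.mpr (List.ne_nil_of_mem htrue)
      have : (0 : ℤ) < (w.length : ℤ) := by exact_mod_cast hw
      linarith
  · left
    have hinv := sigma_invariant w hfalse
    have hgt : (1/2 : ℚ) < act (evalSW w) (1/2) := hinv.2 htrue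
    unfold mu
    rw [hy, act_mul]
    exact (act_strictMono (ι x)) hgt


/-! ### Well-ordering of realizable values: the minimal bad sequence argument -/

def PReal (q : ℚ) : Prop := ∃ w : List (Fin 2), posQ w = q

def Bad (q : ℚ) : Prop :=
  ∃ v : ℕ → ℚ, (∀ n, v (n+1) < v n) ∧ (∀ n, PReal (v n)) ∧ v 0 = q

lemma preal_ge {q : ℚ} (h : PReal q) : 1/2 ≤ q := by
  obtain ⟨w, hw⟩ := h; rw [← hw]; exact posQ_ge w

lemma bad_next {p : ℚ} (hp : Bad p) :
    ∃ n : ℕ, ∃ q, (q < p ∧ Bad q) ∧ ∃ w : List (Fin 2), w.length ≤ n ∧ posQ w = q := by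
  obtain ⟨v, hdec, hP, h0⟩ := hp
  have hb : Bad (v 1) := ⟨fun n => v (n+1), fun n => hdec _, fun n => hP _, rfl⟩
  obtain ⟨w, hw⟩ := hP 1
  exact ⟨w.length, v 1, ⟨h0 ▸ hdec 0, hb⟩, w, le_rfl, hw⟩

open scoped Classical

noncomputable def nextN {p : ℚ} (hp : Bad p) : ℕ := Nat.find (bad_next hp)
noncomputable def nextQ {p : ℚ} (hp : Bad p) : ℚ := (Nat.find_spec (bad_next hp)).choose

lemma nextQ_lt {p : ℚ} (hp : Bad p) : nextQ hp < p ∧ Bad (nextQ hp) :=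
  (Nat.find_spec (bad_next hp)).choose_spec.1

lemma nextQ_word {p : ℚ} (hp : Bad p) :
    ∃ w : List (Fin 2), w.length ≤ nextN hp ∧ posQ w = nextQ hp :=
  (Nat.find_spec (bad_next hp)).choose_spec.2

lemma nextN_min {p : ℚ} (hp : Bad p) {q : ℚ} {w : List (Fin 2)}
    (hq : q < p) (hb : Bad q) (hw : posQ w = q) : nextN hp ≤ w.length := by
  by_contra hc
  push_neg at hc
  exact Nat.find_min (bad_next hp) hc ⟨q, ⟨hq, hb⟩, w, le_rfl, hw⟩

noncomputable def mseq (q0 : ℚ) (h0 : Bad q0) : ℕ → {q : ℚ // Bad q}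
  | 0 => ⟨q0, h0⟩
  | n+1 => ⟨nextQ (mseq q0 h0 n).2, (nextQ_lt (mseq q0 h0 n).2).2⟩

noncomputable def enum (T : Set ℕ) (hT : T.Infinite) : ℕ → ℕ
  | 0 => (hT.exists_gt 0).choose
  | j+1 => (hT.exists_gt (enum T hT j)).choose

lemma enum_mem (T : Set ℕ) (hT : T.Infinite) (j : ℕ) : enum T hT j ∈ T := by
  cases j with
  | zero => exact (hT.exists_gt 0).choose_spec.1
  | succ j => exact (hT.exists_gt (enum T hT j)).choose_spec.1

lemma enum_lt (T : Set ℕ) (hT : T.Infinite) (j : ℕ) : enum T hT j < enum T hT (j+1) :=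
  (hT.exists_gt (enum T hT j)).choose_spec.2

theorem no_bad : ¬ ∃ v : ℕ → ℚ, (∀ n, v (n+1) < v n) ∧ (∀ n, PReal (v n)) := by
  classical
  rintro ⟨v0, hdec0, hP0⟩
  have h0 : Bad (v0 0) := ⟨v0, hdec0, hP0, rfl⟩
  set q0 := v0 0
  -- The minimal bad sequence
  set Vs : ℕ → ℚ := fun n => (mseq q0 h0 n).1 with hVs
  have hB : ∀ n, Bad (Vs n) := fun n => (mseq q0 h0 n).2
  have hsucc : ∀ n, Vs (n+1) = nextQ (hB n) := fun n => rfl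
  have hVdec : ∀ n, Vs (n+1) < Vs n := fun n => (nextQ_lt (hB n)).1
  have hVanti : StrictAnti Vs := strictAnti_nat_of_succ_lt hVdec
  -- minimal words for each Vs (n+1)
  have hword : ∀ n, ∃ w : List (Fin 2), w.length ≤ nextN (hB n) ∧ posQ w = Vs (n+1) :=
    fun n => nextQ_word (hB n)
  set ww : ℕ → List (Fin 2) := fun n => (hword n).choose with hww
  have hwlen : ∀ n, (ww n).length ≤ nextN (hB n) := fun n => (hword n).choose_spec.1
  have hwpos : ∀ n, posQ (ww n) = Vs (n+1) := fun n => (hword n).choose_spec.2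
  have hne : ∀ n, ww n ≠ [] := by
    intro n hnil
    have h1 : Vs (n+1) = 1/2 := by rw [← hwpos n, hnil, posQ_nil]
    have h2 : (1/2 : ℚ) ≤ Vs (n+2) := by
      obtain ⟨v, hdec, hP, hv0⟩ := hB (n+2)
      rw [← hv0]; exact preal_ge (hP 0)
    have := hVdec (n+1)
    rw [h1] at this
    linarith
  set hd : ℕ → Fin 2 := fun n => (ww n).head (hne n) with hhd
  set tl : ℕ → List (Fin 2) := fun n => (ww n).tail with htl
  have hkey : ∀ n, Sfun (hd n) (posQ (tl n)) = Vs (n+1) := by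
    intro n
    rw [← posQ_cons, List.cons_head_tail]
    exact hwpos n
  -- pigeonhole on the leading letter
  have hpig : {n | hd n = 0}.Infinite ∨ {n | hd n = 1}.Infinite := by
    by_contra hcon
    push_neg at hcon
    have huniv : (Set.univ : Set ℕ) ⊆ {n | hd n = 0} ∪ {n | hd n = 1} := by
      intro n _
      rcases fin2_cases (hd n) with h | h
      · exact Or.inl h
      · exact Or.inr h
    exact Set.infinite_univ ((hcon.1.union hcon.2).subset huniv)
  obtain ⟨c, hT⟩ : ∃ c : Fin 2, {n | hd n = c}.Infinite := by
    rcases hpig with h | h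
    · exact ⟨0, h⟩
    · exact ⟨1, h⟩
  set t : ℕ → ℕ := fun j => enum _ hT j with ht
  have htmem : ∀ j, hd (t j) = c := fun j => enum_mem _ hT j
  have htlt : ∀ j, t j < t (j+1) := fun j => enum_lt _ hT j
  set u : ℕ → ℚ := fun j => posQ (tl (t j)) with hu
  have hust : ∀ j, Sfun c (u j) = Vs (t j + 1) := by
    intro j
    rw [hu]
    have := hkey (t j)
    rwa [htmem j] at this
  have hudec : ∀ j, u (j+1) < u j := by
    intro j
    have h1 : Vs (t (j+1) + 1) < Vs (t j + 1) := hVanti (by have := htlt j; omega)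
    rw [← hust j, ← hust (j+1)] at h1
    exact (Sfun_mono c).lt_iff_lt.mp h1
  have hbadu : Bad (u 0) := ⟨u, hudec, fun j => ⟨tl (t j), rfl⟩, rfl⟩
  have hu0lt : u 0 < Vs (t 0) := by
    have h1 : u 0 ≤ Sfun c (u 0) := Sfun_ge c _
    rw [hust 0] at h1
    exact lt_of_le_of_lt h1 (hVdec (t 0))
  have hmin : nextN (hB (t 0)) ≤ (tl (t 0)).length :=
    nextN_min (hB (t 0)) hu0lt hbadu rfl
  have hlen1 : (tl (t 0)).length + 1 = (ww (t 0)).length := by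
    rw [htl, List.length_tail]
    have := List.length_pos_iff.mpr (hne (t 0))
    omega
  have := hwlen (t 0)
  omega


/-! ### No infinite descending chain in B3P -/

theorem no_infinite_chain : ¬ ∃ d : ℕ → B3P, ∀ t, blt (d (t+1)) (d t) := by
  rintro ⟨d, hd⟩
  have hle : ∀ t, mu (d (t+1)) ≤ mu (d t) := by
    intro t
    rcases step_lemma (hd t) with h | ⟨h, _⟩
    · exact le_of_lt h
    · exact le_of_eq h
  have hanti : Antitone (fun t => mu (d t)) :=
    antitone_nat_of_succ_le hle
  by_cases hS : {t | mu (d (t+1)) < mu (d t)}.Infinite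
  · apply no_bad
    refine ⟨fun j => mu (d (enum _ hS j)), fun j => ?_, fun j => ?_⟩
    · have h1 : mu (d (enum _ hS (j+1))) ≤ mu (d (enum _ hS j + 1)) :=
        hanti (by have := enum_lt _ hS j; omega)
      exact lt_of_le_of_lt h1 (enum_mem _ hS j)
    · obtain ⟨w, hw⟩ := mu_realizable (d (enum _ hS j))
      exact ⟨w, hw⟩
  · rw [Set.not_infinite] at hS
    obtain ⟨N, hN⟩ := hS.bddAbove
    have hlam : ∀ t, N + 1 ≤ t → lam (d (t+1)) < lam (d t) := by
      intro t ht
      rcases step_lemma (hd t) with h | ⟨_, h⟩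
      · exfalso
        have hmem : t ∈ {t | mu (d (t+1)) < mu (d t)} := h
        have := hN hmem
        omega
      · exact h
    have hsum : ∀ j : ℕ, lam (d (N+1+j)) + j ≤ lam (d (N+1)) := by
      intro j
      induction j with
      | zero => simp
      | succ j ih =>
        have h1 : lam (d (N+1+j+1)) < lam (d (N+1+j)) := hlam (N+1+j) (by omega)
        have h2 : N+1+(j+1) = N+1+j+1 := by omega
        rw [h2]
        push_cast
        push_cast at ih
        linarith
    set L := lam (d (N+1)) with hL
    have hL0 : 0 ≤ L := lam_nonneg _
    have := hsum (L.toNat + 1)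
    have h3 := lam_nonneg (d (N+1+(L.toNat+1)))
    have h4 : (L.toNat : ℤ) = L := Int.toNat_of_nonneg hL0
    push_cast at this
    linarith


/-! ### Divisibility and finiteness in B3P -/

lemma mkw_append (w1 w2 : List (Fin 2)) : mkw (w1 ++ w2) = mkw w1 * mkw w2 := by
  unfold mkw
  rw [← map_mul]
  rfl

lemma rel_eq : (mkw [0,1,0] : B3P) = mkw [1,0,1] := by
  unfold mkw
  have h : braidCon (FreeMonoid.ofList [0,1,0]) (FreeMonoid.ofList [1,0,1]) :=
    ConGen.Rel.of _ _ ⟨rfl, rfl⟩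
  exact (Con.eq braidCon).mpr h

def sw (i : Fin 2) : Fin 2 := if i = 0 then 1 else 0

noncomputable def tau : B3P →* B3P :=
  Con.lift _ ((Con.mk' braidCon).comp (FreeMonoid.map sw)) (by
    apply Con.conGen_le.mpr
    rintro u v ⟨hu, hv⟩
    subst hu; subst hv
    rw [Con.ker_rel]
    simp only [MonoidHom.comp_apply, map_mul, FreeMonoid.map_of]
    show braidCon.mk' (FreeMonoid.ofList [1,0,1]) = braidCon.mk' (FreeMonoid.ofList [0,1,0])
    exact rel_eq.symm)

lemma tau_single (i : Fin 2) : tau (mkw [i]) = mkw [sw i] := by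
  unfold tau mkw
  erw [Con.lift_mk']

lemma gen_delta (i : Fin 2) : mkw [i] * Δ = Δ * mkw [sw i] := by
  rcases fin2_cases i with rfl | rfl
  · show mkw [0] * mkw [0,1,0] = mkw [0,1,0] * mkw [sw 0]
    rw [show sw 0 = 1 from rfl]
    calc mkw [0] * mkw [0,1,0] = mkw [0] * mkw [1,0,1] := by rw [rel_eq]
    _ = mkw ([0] ++ [1,0,1]) := (mkw_append _ _).symm
    _ = mkw ([0,1,0] ++ [1]) := rfl
    _ = mkw [0,1,0] * mkw [1] := mkw_append _ _
  · show mkw [1] * mkw [0,1,0] = mkw [0,1,0] * mkw [sw 1]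
    rw [show sw 1 = 0 from rfl]
    calc mkw [1] * mkw [0,1,0] = mkw ([1] ++ [0,1,0]) := (mkw_append _ _).symm
    _ = mkw ([1,0,1] ++ [0]) := rfl
    _ = mkw [1,0,1] * mkw [0] := mkw_append _ _
    _ = mkw [0,1,0] * mkw [0] := by rw [rel_eq]

lemma delta_comm (b : B3P) : b * Δ = Δ * tau b := by
  obtain ⟨w, hw⟩ := exists_word b
  subst hw
  induction w with
  | nil => rw [mkw_nil, map_one, one_mul, mul_one]
  | cons i t ih =>
    rw [mkw_cons, map_mul, tau_single, mul_assoc, ih, ← mul_assoc, gen_delta, mul_assoc]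

lemma delta_comm_pow (n : ℕ) (b : B3P) : b * Δ ^ n = Δ ^ n * (tau^[n] b) := by
  induction n generalizing b with
  | zero => simp
  | succ n ih =>
    rw [pow_succ, ← mul_assoc, ih, mul_assoc, delta_comm, ← mul_assoc, ← pow_succ]
    rw [Function.iterate_succ_apply']

def dd (i : Fin 2) : B3P := if i = 0 then mkw [1,0] else mkw [0,1]

lemma gen_div (i : Fin 2) : mkw [i] * dd i = Δ := by
  rcases fin2_cases i with rfl | rfl
  · show mkw [0] * mkw [1,0] = mkw [0,1,0]
    rw [← mkw_append]; rfl
  · show mkw [1] * mkw [0,1] = mkw [0,1,0]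
    rw [← mkw_append]
    exact rel_eq.symm

lemma word_div (w : List (Fin 2)) : ∃ c, mkw w * c = Δ ^ w.length := by
  induction w with
  | nil => exact ⟨1, by rw [mkw_nil, one_mul, List.length_nil, pow_zero]⟩
  | cons i t ih =>
    obtain ⟨c, hc⟩ := ih
    refine ⟨c * (tau^[t.length] (dd i)), ?_⟩
    calc mkw (i :: t) * (c * tau^[t.length] (dd i))
        = mkw [i] * (mkw t * c) * tau^[t.length] (dd i) := by
          rw [mkw_cons]; simp only [mul_assoc]
    _ = mkw [i] * (Δ ^ t.length * tau^[t.length] (dd i)) := by rw [hc, mul_assoc]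
    _ = mkw [i] * (dd i * Δ ^ t.length) := by rw [← delta_comm_pow]
    _ = (mkw [i] * dd i) * Δ ^ t.length := by rw [mul_assoc]
    _ = Δ ^ (t.length + 1) := by rw [gen_div, pow_succ']

lemma exists_div (b : B3P) : ∃ ℓ c, b * c = Δ ^ ℓ := by
  obtain ⟨w, hw⟩ := exists_word b
  exact ⟨w.length, hw ▸ word_div w⟩

lemma compl_divides {b : B3P} {C : ℕ} (h : compl b ≤ C) : ∃ c, b * c = Δ ^ C := by
  have hne : {ℓ | ∃ c, b * c = Δ ^ ℓ}.Nonempty := by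
    obtain ⟨ℓ, c, hc⟩ := exists_div b
    exact ⟨ℓ, c, hc⟩
  have hmem : compl b ∈ {ℓ | ∃ c, b * c = Δ ^ ℓ} := Nat.sInf_mem hne
  obtain ⟨c, hc⟩ := hmem
  refine ⟨c * Δ ^ (C - compl b), ?_⟩
  rw [← mul_assoc, hc, ← pow_add]
  congr 1
  omega

/-! ### Length and finiteness -/

noncomputable def Len : B3P →* Multiplicative ℕ :=
  Con.lift _ (FreeMonoid.lift fun _ => Multiplicative.ofAdd 1) (by
    apply Con.conGen_le.mpr
    rintro u v ⟨hu, hv⟩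
    subst hu; subst hv
    rw [Con.ker_rel]
    simp [map_mul, FreeMonoid.lift_eval_of])

noncomputable def len (b : B3P) : ℕ := Multiplicative.toAdd (Len b)

lemma len_mul (a b : B3P) : len (a * b) = len a + len b := by
  unfold len; rw [map_mul]; rfl

lemma len_mkw (w : List (Fin 2)) : len (mkw w) = w.length := by
  induction w with
  | nil => rw [mkw_nil]; unfold len; rw [map_one]; rfl
  | cons i t ih =>
    rw [mkw_cons, len_mul, ih]
    have h1 : len (mkw [i]) = 1 := by
      unfold len Len mkw
      erw [Con.lift_mk']
      rw [show FreeMonoid.ofList [i] = FreeMonoid.of i from rfl, FreeMonoid.lift_eval_of]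
      rfl
    rw [h1]
    simp [List.length_cons]
    ring

lemma len_delta_pow (C : ℕ) : len (Δ ^ C) = 3 * C := by
  induction C with
  | zero => rw [pow_zero]; unfold len; rw [map_one]; rfl
  | succ C ih =>
    rw [pow_succ, len_mul, ih]
    have : len Δ = 3 := len_mkw [0,1,0]
    rw [this]
    ring

lemma divisors_finite (C : ℕ) : {b : B3P | ∃ c, b * c = Δ ^ C}.Finite := by
  have hsub : {b : B3P | ∃ c, b * c = Δ ^ C} ⊆
      (fun w : List (Fin 2) => mkw w) '' {w | w.length ≤ 3 * C} := by
    rintro b ⟨c, hc⟩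
    obtain ⟨w, hw⟩ := exists_word b
    refine ⟨w, ?_, hw⟩
    have h1 : len b + len c = 3 * C := by rw [← len_mul, hc, len_delta_pow]
    have h2 : len b = w.length := by rw [← hw, len_mkw]
    simp only [Set.mem_setOf_eq]
    omega
  exact ((List.finite_length_le (Fin 2) (3 * C)).image _).subset hsub


lemma ultra_choice {X : Type*} (U : Ultrafilter ℕ) (F : ℕ → X) (S : Set X) (hS : S.Finite)
    (hF : {m | F m ∈ S} ∈ U) : ∃ x ∈ S, {m | F m = x} ∈ U := by
  have h : {m | F m ∈ S} ⊆ ⋃ x ∈ S, {m | F m = x} := by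
    intro m hm
    exact Set.mem_biUnion hm rfl
  have h2 : (⋃ x ∈ S, {m | F m = x}) ∈ U := Filter.mem_of_superset hF h
  exact (Ultrafilter.finite_biUnion_mem_iff hS).mp h2

end Dyn

/-- The principle WO_f : for each k there is m such that every (k, f)-simple strictly
descending sequence in B₃⁺ has length less than m. -/
theorem WO_f (f : ℕ → ℕ) (k : ℕ) :
    ∃ m : ℕ, ∀ (bs : ℕ → B3P) (m' : ℕ),
      (∀ t, t ≤ m' → compl (bs t) ≤ k + f t) →
      (∀ t, t < m' → blt (bs (t + 1)) (bs t)) → m' < m := by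
  classical
  by_contra hcon
  push_neg at hcon
  have H : ∀ m : ℕ, ∃ a : ℕ → B3P, (∀ t, t ≤ m → compl (a t) ≤ k + f t) ∧
      (∀ t, t < m → blt (a (t+1)) (a t)) := by
    intro m
    obtain ⟨bs, m', h1, h2, h3⟩ := hcon m
    exact ⟨bs, fun t ht => h1 t (le_trans ht h3), fun t ht => h2 t (lt_of_lt_of_le ht h3)⟩
  choose a ha1 ha2 using H
  set U : Ultrafilter ℕ := Filter.hyperfilter ℕ with hU
  have hup : ∀ t : ℕ, {m : ℕ | t ≤ m} ∈ U := by
    intro t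
    have h1 : {m : ℕ | t ≤ m} = {m : ℕ | m < t}ᶜ := by
      ext m; simp [not_lt]
    rw [h1]
    exact Filter.compl_mem_hyperfilter_of_finite (Set.finite_Iio t)
  have hdiv : ∀ t : ℕ, {m : ℕ | a m t ∈ {b : B3P | ∃ c, b * c = Δ ^ (k + f t)}} ∈ U := by
    intro t
    refine Filter.mem_of_superset (hup t) ?_
    intro m (hm : t ≤ m)
    exact Dyn.compl_divides (ha1 m t hm)
  have hchoice : ∀ t : ℕ, ∃ x, {m : ℕ | a m t = x} ∈ U := by
    intro t
    obtain ⟨x, _, hx⟩ := Dyn.ultra_choice U (fun m => a m t) _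
      (Dyn.divisors_finite (k + f t)) (hdiv t)
    exact ⟨x, hx⟩
  choose d hd using hchoice
  have hchain : ∀ t, blt (d (t+1)) (d t) := by
    intro t
    have hmem : ({m : ℕ | a m t = d t} ∩ {m : ℕ | a m (t+1) = d (t+1)} ∩ {m : ℕ | t+1 ≤ m}) ∈ U :=
      Filter.inter_mem (Filter.inter_mem (hd t) (hd (t+1))) (hup (t+1))
    obtain ⟨m, ⟨hm1, hm2⟩, hm3⟩ := Ultrafilter.nonempty_of_mem hmem
    have := ha2 m t (by exact lt_of_lt_of_le (Nat.lt_succ_self t) hm3)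
    rwa [hm1, hm2] at this
  exact Dyn.no_infinite_chain ⟨d, hchain⟩

end Braid3
end
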